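/- arXiv:2210.01899 — 10 statements merged into one kernel-verified Lean document; each statement's English description precedes it below -/
import Mathlib

section
/- Let λ, μ, ω, h ∈ ℝ with μ > 0, λ + 2μ > 0, h > 0, and let k, p, q ∈ ℂ satisfy p² = ω²/(λ+2μ) − k², q² = ω²/μ − k², and the symmetric Rayleigh–Lamb equation in product form: (q²−k²)² sin(qh) cos(ph) + 4k²pq sin(ph) cos(qh) = 0. Define the functions on [−h,h]: u(z) = ik(q²−k²) sin(qh) cos(pz) − 2ikpq sin(ph) cos(qz); t(z) = 2ikμ(q²−k²)p(−sin(qh) sin(pz) + sin(ph) sin(qz)); (−s)(z) = (q²−k²)((λ+2μ)k² + λp²) sin(qh) cos(pz) − 4μpqk² sin(ph) cos(qz); v(z) = −p(q²−k²) sin(qh) sin(pz) − 2k²p sin(ph) sin(qz). Then X = (u, t) and Y = (−s, v) satisfy F(Y)(z) = ik·X(z) and G(X)(z) = ik·Y(z) for all z ∈ [−h,h], together with the boundary conditions B₁(X)(±h) = 0 and B₂(Y)(±h) = 0; that is, (X, Y) is a (symmetric) Lamb mode with wavenumber k. -/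
open Complex Set


private lemma hasDerivAt_csin (c : ℂ) (z : ℝ) :
    HasDerivAt (fun x : ℝ => Complex.sin (c*x)) (c * Complex.cos (c*z)) z := by
  have h1 : HasDerivAt (fun w : ℂ => Complex.sin (c*w)) (Complex.cos (c*(z:ℂ)) * (c*1)) (z:ℂ) :=
    (Complex.hasDerivAt_sin (c*(z:ℂ))).comp (z:ℂ) ((hasDerivAt_id (z:ℂ)).const_mul c)
  simpa [mul_comm] using h1.comp_ofReal

private lemma hasDerivAt_ccos (c : ℂ) (z : ℝ) :
    HasDerivAt (fun x : ℝ => Complex.cos (c*x)) (-(c * Complex.sin (c*z))) z := by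
  have h1 : HasDerivAt (fun w : ℂ => Complex.cos (c*w)) (-Complex.sin (c*(z:ℂ)) * (c*1)) (z:ℂ) :=
    (Complex.hasDerivAt_cos (c*(z:ℂ))).comp (z:ℂ) ((hasDerivAt_id (z:ℂ)).const_mul c)
  simpa [mul_comm] using h1.comp_ofReal


/-- **Symmetric Lamb modes.** Given Lamé parameters `lam, mu`, frequency `om`, half-width
`h0 > 0`, and `k, p, q : ℂ` satisfying the dispersion relations and the symmetric
Rayleigh–Lamb equation in product form, the explicit trigonometric profiles
`X = (u, t)`, `Y = (-s, v)` satisfy `F(Y) = ik·X`, `G(X) = ik·Y` on `[-h0, h0]` together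
with the boundary conditions `B₁(X)(±h0) = B₂(Y)(±h0) = 0`; i.e. `(X, Y)` is a
(symmetric) Lamb mode with wavenumber `k`. -/
theorem symmetric_lamb_mode
    (lam mu om h0 : ℝ) (hmu : 0 < mu) (hlm : 0 < lam + 2*mu) (hh : 0 < h0)
    (k p q : ℂ)
    (hp : p^2 = (om:ℂ)^2/((lam:ℂ)+2*(mu:ℂ)) - k^2)
    (hq : q^2 = (om:ℂ)^2/(mu:ℂ) - k^2)
    (hRL : (q^2-k^2)^2 * Complex.sin (q*h0) * Complex.cos (p*h0)
        + 4*k^2*p*q*Complex.sin (p*h0) * Complex.cos (q*h0) = 0)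
    (u t ms v : ℝ → ℂ)
    (hu : u = fun z : ℝ => Complex.I*k*(q^2-k^2)*Complex.sin (q*h0)*Complex.cos (p*z)
        - 2*Complex.I*k*p*q*Complex.sin (p*h0)*Complex.cos (q*z))
    (ht : t = fun z : ℝ => 2*Complex.I*k*(mu:ℂ)*(q^2-k^2)*p*
        (-Complex.sin (q*h0)*Complex.sin (p*z) + Complex.sin (p*h0)*Complex.sin (q*z)))
    (hms : ms = fun z : ℝ => (q^2-k^2)*(((lam:ℂ)+2*(mu:ℂ))*k^2 + (lam:ℂ)*p^2)*
        Complex.sin (q*h0)*Complex.cos (p*z)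
        - 4*(mu:ℂ)*p*q*k^2*Complex.sin (p*h0)*Complex.cos (q*z))
    (hv : v = fun z : ℝ => -p*(q^2-k^2)*Complex.sin (q*h0)*Complex.sin (p*z)
        - 2*k^2*p*Complex.sin (p*h0)*Complex.sin (q*z)) :
    (∀ z ∈ Set.Icc (-h0) h0,
        (-(ms z)/((lam:ℂ)+2*(mu:ℂ)) - ((lam:ℂ)/((lam:ℂ)+2*(mu:ℂ))) * deriv v z
            = Complex.I*k*u z)
        ∧ (((lam:ℂ)/((lam:ℂ)+2*(mu:ℂ))) * deriv ms z - (om:ℂ)^2 * v z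
            - ((4*(mu:ℂ)*((lam:ℂ)+(mu:ℂ)))/((lam:ℂ)+2*(mu:ℂ))) * deriv (deriv v) z
            = Complex.I*k*t z)
        ∧ ((om:ℂ)^2 * u z + deriv t z = Complex.I*k*ms z)
        ∧ (-(deriv u z) + t z/(mu:ℂ) = Complex.I*k*v z))
    ∧ (t h0 = 0 ∧ t (-h0) = 0)
    ∧ (-((lam:ℂ)/((lam:ℂ)+2*(mu:ℂ))) * ms h0
          + ((4*(mu:ℂ)*((lam:ℂ)+(mu:ℂ)))/((lam:ℂ)+2*(mu:ℂ))) * deriv v h0 = 0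
       ∧ -((lam:ℂ)/((lam:ℂ)+2*(mu:ℂ))) * ms (-h0)
          + ((4*(mu:ℂ)*((lam:ℂ)+(mu:ℂ)))/((lam:ℂ)+2*(mu:ℂ))) * deriv v (-h0) = 0) := by
  have hL : ((lam:ℂ)+2*(mu:ℂ)) ≠ 0 := by
    have : ((lam + 2*mu : ℝ) : ℂ) ≠ 0 := Complex.ofReal_ne_zero.mpr hlm.ne'
    push_cast at this; exact this
  have hM : ((mu:ℂ)) ≠ 0 := Complex.ofReal_ne_zero.mpr hmu.ne'
  have hom1 : (om:ℂ)^2 = ((lam:ℂ)+2*(mu:ℂ))*(p^2+k^2) := by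
    field_simp at hp; linear_combination -hp
  have hpq : (mu:ℂ)*(q^2+k^2) = ((lam:ℂ)+2*(mu:ℂ))*(p^2+k^2) := by
    field_simp at hq; rw [← hom1]; linear_combination hq
  have hdu : deriv u = fun z : ℝ =>
      Complex.I*k*(q^2-k^2)*Complex.sin (q*h0)*(-(p*Complex.sin (p*z)))
        - 2*Complex.I*k*p*q*Complex.sin (p*h0)*(-(q*Complex.sin (q*z))) := by
    rw [hu]; funext z
    exact (((hasDerivAt_ccos p z).const_mul _).sub ((hasDerivAt_ccos q z).const_mul _)).deriv
  have hdt : deriv t = fun z : ℝ =>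
      2*Complex.I*k*(mu:ℂ)*(q^2-k^2)*p*
        (-Complex.sin (q*h0)*(p*Complex.cos (p*z)) + Complex.sin (p*h0)*(q*Complex.cos (q*z))) := by
    rw [ht]; funext z
    exact ((((hasDerivAt_csin p z).const_mul _).add ((hasDerivAt_csin q z).const_mul _)).const_mul _).deriv
  have hdms : deriv ms = fun z : ℝ =>
      (q^2-k^2)*(((lam:ℂ)+2*(mu:ℂ))*k^2 + (lam:ℂ)*p^2)*Complex.sin (q*h0)*(-(p*Complex.sin (p*z)))
        - 4*(mu:ℂ)*p*q*k^2*Complex.sin (p*h0)*(-(q*Complex.sin (q*z))) := by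
    rw [hms]; funext z
    exact (((hasDerivAt_ccos p z).const_mul _).sub ((hasDerivAt_ccos q z).const_mul _)).deriv
  have hdv : deriv v = fun z : ℝ =>
      -p*(q^2-k^2)*Complex.sin (q*h0)*(p*Complex.cos (p*z))
        - 2*k^2*p*Complex.sin (p*h0)*(q*Complex.cos (q*z)) := by
    rw [hv]; funext z
    exact (((hasDerivAt_csin p z).const_mul _).sub ((hasDerivAt_csin q z).const_mul _)).deriv
  have hddv : deriv (deriv v) = fun z : ℝ =>
      -p*(q^2-k^2)*Complex.sin (q*h0)*(p*(-(p*Complex.sin (p*z))))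
        - 2*k^2*p*Complex.sin (p*h0)*(q*(-(q*Complex.sin (q*z)))) := by
    rw [hdv]; funext z
    exact ((((hasDerivAt_ccos p z).const_mul p).const_mul _).sub
      (((hasDerivAt_ccos q z).const_mul q).const_mul _)).deriv
  refine ⟨fun z _ => ⟨?_, ?_, ?_, ?_⟩, ⟨?_, ?_⟩, ?_, ?_⟩
  · rw [hdv]; simp only [hms, hu]
    field_simp
    linear_combination
      (-(((lam:ℂ)+2*(mu:ℂ))*k*(k*(q^2-k^2)*Complex.sin (q*h0)*Complex.cos (p*z)
        - 2*k*p*q*Complex.sin (p*h0)*Complex.cos (q*z))))*Complex.I_sq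
  · rw [hddv, hdms]; simp only [ht, hv]
    have key2 : (lam:ℂ)*((q^2-k^2)*(((lam:ℂ)+2*(mu:ℂ))*k^2 + (lam:ℂ)*p^2)*Complex.sin (q*h0)*(-(p*Complex.sin (p*z)))
          - 4*(mu:ℂ)*p*q*k^2*Complex.sin (p*h0)*(-(q*Complex.sin (q*z))))
        - 4*(mu:ℂ)*((lam:ℂ)+(mu:ℂ))*(-p*(q^2-k^2)*Complex.sin (q*h0)*(p*(-(p*Complex.sin (p*z))))
          - 2*k^2*p*Complex.sin (p*h0)*(q*(-(q*Complex.sin (q*z)))))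
        = (Complex.I*k*(2*Complex.I*k*(mu:ℂ)*(q^2-k^2)*p*
            (-Complex.sin (q*h0)*Complex.sin (p*z) + Complex.sin (p*h0)*Complex.sin (q*z)))
          + (om:ℂ)^2*(-p*(q^2-k^2)*Complex.sin (q*h0)*Complex.sin (p*z)
            - 2*k^2*p*Complex.sin (p*h0)*Complex.sin (q*z)))*((lam:ℂ)+2*(mu:ℂ)) := by
      linear_combination (-(((lam:ℂ)+2*(mu:ℂ)))*(-p*(q^2-k^2)*Complex.sin (q*h0)*Complex.sin (p*z)
          - 2*k^2*p*Complex.sin (p*h0)*Complex.sin (q*z)))*hom1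
        - ((lam:ℂ)+2*(mu:ℂ))*2*k^2*p*Complex.sin (p*h0)*Complex.sin (q*z)*hpq
        - ((lam:ℂ)+2*(mu:ℂ))*k*(2*k*(mu:ℂ)*(q^2-k^2)*p*
            (-Complex.sin (q*h0)*Complex.sin (p*z) + Complex.sin (p*h0)*Complex.sin (q*z)))*Complex.I_sq
    linear_combination (norm := (field_simp; ring1)) (1/((lam:ℂ)+2*(mu:ℂ)))*key2
  · rw [hdt]; simp only [hu, hms]
    linear_combination (Complex.I*k*(q^2-k^2)*Complex.sin (q*h0)*Complex.cos (p*z)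
        - 2*Complex.I*k*p*q*Complex.sin (p*h0)*Complex.cos (q*z))*hom1
      + 2*Complex.I*k*p*q*Complex.sin (p*h0)*Complex.cos (q*z)*hpq
  · rw [hdu]; simp only [ht, hv]
    field_simp
    ring
  · simp only [ht]; ring
  · simp only [ht, Complex.ofReal_neg, mul_neg, Complex.sin_neg]; ring
  · rw [hdv]; simp only [hms]
    have keyB : -(lam:ℂ)*((q^2-k^2)*(((lam:ℂ)+2*(mu:ℂ))*k^2 + (lam:ℂ)*p^2)*Complex.sin (q*h0)*Complex.cos (p*h0)
          - 4*(mu:ℂ)*p*q*k^2*Complex.sin (p*h0)*Complex.cos (q*h0))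
        + 4*(mu:ℂ)*((lam:ℂ)+(mu:ℂ))*(-p*(q^2-k^2)*Complex.sin (q*h0)*(p*Complex.cos (p*h0))
          - 2*k^2*p*Complex.sin (p*h0)*(q*Complex.cos (q*h0))) = 0 := by
      linear_combination (-(mu:ℂ)*((lam:ℂ)+2*(mu:ℂ)))*hRL
        + ((lam:ℂ)+2*(mu:ℂ))*(q^2-k^2)*Complex.sin (q*h0)*Complex.cos (p*h0)*hpq
    linear_combination (norm := (field_simp; ring1)) (1/((lam:ℂ)+2*(mu:ℂ)))*keyB
  · rw [hdv]; simp only [hms, Complex.ofReal_neg, mul_neg, Complex.cos_neg]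
    have keyB : -(lam:ℂ)*((q^2-k^2)*(((lam:ℂ)+2*(mu:ℂ))*k^2 + (lam:ℂ)*p^2)*Complex.sin (q*h0)*Complex.cos (p*h0)
          - 4*(mu:ℂ)*p*q*k^2*Complex.sin (p*h0)*Complex.cos (q*h0))
        + 4*(mu:ℂ)*((lam:ℂ)+(mu:ℂ))*(-p*(q^2-k^2)*Complex.sin (q*h0)*(p*Complex.cos (p*h0))
          - 2*k^2*p*Complex.sin (p*h0)*(q*Complex.cos (q*h0))) = 0 := by
      linear_combination (-(mu:ℂ)*((lam:ℂ)+2*(mu:ℂ)))*hRL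
        + ((lam:ℂ)+2*(mu:ℂ))*(q^2-k^2)*Complex.sin (q*h0)*Complex.cos (p*h0)*hpq
    linear_combination (norm := (field_simp; ring1)) (1/((lam:ℂ)+2*(mu:ℂ)))*keyB
end

section
/- Let λ, μ, ω, h ∈ ℝ with μ > 0, λ + 2μ > 0, h > 0, and let k, p, q ∈ ℂ satisfy p² = ω²/(λ+2μ) − k², q² = ω²/μ − k², and the antisymmetric Rayleigh–Lamb equation in product form: (q²−k²)² cos(qh) sin(ph) + 4k²pq cos(ph) sin(qh) = 0. Define the functions on [−h,h]: u(z) = ik(q²−k²) cos(qh) sin(pz) − 2ikpq cos(ph) sin(qz); t(z) = 2ikμ(q²−k²)p(cos(qh) cos(pz) − cos(ph) cos(qz)); (−s)(z) = (q²−k²)((λ+2μ)k² + λp²) cos(qh) sin(pz) − 4μpqk² cos(ph) sin(qz); v(z) = p(q²−k²) cos(qh) cos(pz) + 2k²p cos(ph) cos(qz). Then X = (u, t) and Y = (−s, v) satisfy F(Y)(z) = ik·X(z) and G(X)(z) = ik·Y(z) for all z ∈ [−h,h], together with the boundary conditions B₁(X)(±h) = 0 and B₂(Y)(±h) = 0;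 that is, (X, Y) is an (antisymmetric) Lamb mode with wavenumber k. -/
open Complex Set

lemma hasDerivAt_csin_mul (a : ℂ) (z : ℝ) :
    HasDerivAt (fun x : ℝ => Complex.sin (a*x)) (a * Complex.cos (a*z)) z := by
  have h1 : HasDerivAt (fun w : ℂ => Complex.sin (a*w)) (a * Complex.cos (a*(z:ℂ))) (z:ℂ) := by
    simpa [mul_comm, Function.comp_def] using (Complex.hasDerivAt_sin (a*(z:ℂ))).comp (z:ℂ)
      ((hasDerivAt_id (z:ℂ)).const_mul a)
  exact h1.comp_ofReal

lemma hasDerivAt_ccos_mul (a : ℂ) (z : ℝ) :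
    HasDerivAt (fun x : ℝ => Complex.cos (a*x)) (-(a * Complex.sin (a*z))) z := by
  have h1 : HasDerivAt (fun w : ℂ => Complex.cos (a*w)) (-(a * Complex.sin (a*(z:ℂ)))) (z:ℂ) := by
    simpa [mul_comm, Function.comp_def] using (Complex.hasDerivAt_cos (a*(z:ℂ))).comp (z:ℂ)
      ((hasDerivAt_id (z:ℂ)).const_mul a)
  exact h1.comp_ofReal

/-- **Antisymmetric Lamb modes.** Given Lamé parameters `lam, mu`, frequency `om`, half-width
`h0 > 0`, and `k, p, q : ℂ` satisfying the dispersion relations and the antisymmetric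
Rayleigh–Lamb equation in product form, the explicit trigonometric profiles
`X = (u, t)`, `Y = (-s, v)` satisfy `F(Y) = ik·X`, `G(X) = ik·Y` on `[-h0, h0]` together
with the boundary conditions `B₁(X)(±h0) = B₂(Y)(±h0) = 0`; i.e. `(X, Y)` is an
(antisymmetric) Lamb mode with wavenumber `k`. -/
theorem antisymmetric_lamb_mode
    (lam mu om h0 : ℝ) (hmu : 0 < mu) (hlm : 0 < lam + 2*mu) (hh : 0 < h0)
    (k p q : ℂ)
    (hp : p^2 = (om:ℂ)^2/((lam:ℂ)+2*(mu:ℂ)) - k^2)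
    (hq : q^2 = (om:ℂ)^2/(mu:ℂ) - k^2)
    (hRL : (q^2-k^2)^2 * Complex.cos (q*h0) * Complex.sin (p*h0)
        + 4*k^2*p*q*Complex.cos (p*h0) * Complex.sin (q*h0) = 0)
    (u t ms v : ℝ → ℂ)
    (hu : u = fun z : ℝ => Complex.I*k*(q^2-k^2)*Complex.cos (q*h0)*Complex.sin (p*z)
        - 2*Complex.I*k*p*q*Complex.cos (p*h0)*Complex.sin (q*z))
    (ht : t = fun z : ℝ => 2*Complex.I*k*(mu:ℂ)*(q^2-k^2)*p*
        (Complex.cos (q*h0)*Complex.cos (p*z) - Complex.cos (p*h0)*Complex.cos (q*z)))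
    (hms : ms = fun z : ℝ => (q^2-k^2)*(((lam:ℂ)+2*(mu:ℂ))*k^2 + (lam:ℂ)*p^2)*
        Complex.cos (q*h0)*Complex.sin (p*z)
        - 4*(mu:ℂ)*p*q*k^2*Complex.cos (p*h0)*Complex.sin (q*z))
    (hv : v = fun z : ℝ => p*(q^2-k^2)*Complex.cos (q*h0)*Complex.cos (p*z)
        + 2*k^2*p*Complex.cos (p*h0)*Complex.cos (q*z)) :
    (∀ z ∈ Set.Icc (-h0) h0,
        (-(ms z)/((lam:ℂ)+2*(mu:ℂ)) - ((lam:ℂ)/((lam:ℂ)+2*(mu:ℂ))) * deriv v z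
            = Complex.I*k*u z)
        ∧ (((lam:ℂ)/((lam:ℂ)+2*(mu:ℂ))) * deriv ms z - (om:ℂ)^2 * v z
            - ((4*(mu:ℂ)*((lam:ℂ)+(mu:ℂ)))/((lam:ℂ)+2*(mu:ℂ))) * deriv (deriv v) z
            = Complex.I*k*t z)
        ∧ ((om:ℂ)^2 * u z + deriv t z = Complex.I*k*ms z)
        ∧ (-(deriv u z) + t z/(mu:ℂ) = Complex.I*k*v z))
    ∧ (t h0 = 0 ∧ t (-h0) = 0)
    ∧ (-((lam:ℂ)/((lam:ℂ)+2*(mu:ℂ))) * ms h0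
          + ((4*(mu:ℂ)*((lam:ℂ)+(mu:ℂ)))/((lam:ℂ)+2*(mu:ℂ))) * deriv v h0 = 0
       ∧ -((lam:ℂ)/((lam:ℂ)+2*(mu:ℂ))) * ms (-h0)
          + ((4*(mu:ℂ)*((lam:ℂ)+(mu:ℂ)))/((lam:ℂ)+2*(mu:ℂ))) * deriv v (-h0) = 0) := by
  have hLne : ((lam:ℂ)+2*(mu:ℂ)) ≠ 0 := by
    have : ((lam + 2*mu : ℝ) : ℂ) ≠ 0 := Complex.ofReal_ne_zero.mpr hlm.ne'
    push_cast at this; exact this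
  have hmuC : ((mu:ℂ)) ≠ 0 := Complex.ofReal_ne_zero.mpr hmu.ne'
  have hom1 : (om:ℂ)^2 = ((lam:ℂ)+2*(mu:ℂ))*(p^2+k^2) := by
    field_simp at hp; linear_combination -hp
  have hom2 : (om:ℂ)^2 = (mu:ℂ)*(q^2+k^2) := by
    field_simp at hq; linear_combination -hq
  have hu' : ∀ z:ℝ, HasDerivAt u
      (Complex.I*k*(q^2-k^2)*Complex.cos (q*h0)*(p*Complex.cos (p*z))
        - 2*Complex.I*k*p*q*Complex.cos (p*h0)*(q*Complex.cos (q*z))) z := by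
    intro z; rw [hu]
    exact ((hasDerivAt_csin_mul p z).const_mul _).sub ((hasDerivAt_csin_mul q z).const_mul _)
  have ht' : ∀ z:ℝ, HasDerivAt t
      (2*Complex.I*k*(mu:ℂ)*(q^2-k^2)*p*
        (Complex.cos (q*h0)*(-(p*Complex.sin (p*z))) - Complex.cos (p*h0)*(-(q*Complex.sin (q*z))))) z := by
    intro z; rw [ht]
    exact (((hasDerivAt_ccos_mul p z).const_mul _).sub ((hasDerivAt_ccos_mul q z).const_mul _)).const_mul _
  have hms' : ∀ z:ℝ, HasDerivAt ms
      ((q^2-k^2)*(((lam:ℂ)+2*(mu:ℂ))*k^2 + (lam:ℂ)*p^2)*Complex.cos (q*h0)*(p*Complex.cos (p*z))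
        - 4*(mu:ℂ)*p*q*k^2*Complex.cos (p*h0)*(q*Complex.cos (q*z))) z := by
    intro z; rw [hms]
    exact ((hasDerivAt_csin_mul p z).const_mul _).sub ((hasDerivAt_csin_mul q z).const_mul _)
  have hv' : ∀ z:ℝ, HasDerivAt v
      (p*(q^2-k^2)*Complex.cos (q*h0)*(-(p*Complex.sin (p*z)))
        + 2*k^2*p*Complex.cos (p*h0)*(-(q*Complex.sin (q*z)))) z := by
    intro z; rw [hv]
    exact ((hasDerivAt_ccos_mul p z).const_mul _).add ((hasDerivAt_ccos_mul q z).const_mul _)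
  have hdv : deriv v = fun z : ℝ =>
      p*(q^2-k^2)*Complex.cos (q*h0)*(-(p*Complex.sin (p*z)))
        + 2*k^2*p*Complex.cos (p*h0)*(-(q*Complex.sin (q*z))) :=
    funext fun z => (hv' z).deriv
  have hv'' : ∀ z:ℝ, HasDerivAt (deriv v)
      (p*(q^2-k^2)*Complex.cos (q*h0)*(-(p*(p*Complex.cos (p*z))))
        + 2*k^2*p*Complex.cos (p*h0)*(-(q*(q*Complex.cos (q*z))))) z := by
    intro z; rw [hdv]
    exact ((((hasDerivAt_csin_mul p z).const_mul p).neg).const_mul _).add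
      ((((hasDerivAt_csin_mul q z).const_mul q).neg).const_mul _)
  have hLinv : (((lam:ℂ)+2*(mu:ℂ)))⁻¹ * (((lam:ℂ)+2*(mu:ℂ))) = 1 := inv_mul_cancel₀ hLne
  have hMinv : ((mu:ℂ))⁻¹ * ((mu:ℂ)) = 1 := inv_mul_cancel₀ hmuC
  refine ⟨fun z _ => ⟨?_, ?_, ?_, ?_⟩, ⟨?_, ?_⟩, ?_, ?_⟩
  · -- eq1
    have key : -(ms z) - (lam:ℂ)*(deriv v z)
        = Complex.I*k*(u z)*(((lam:ℂ)+2*(mu:ℂ))) := by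
      rw [(hv' z).deriv]; simp only [hu, hms]
      linear_combination (-((((lam:ℂ)+2*(mu:ℂ)))*(k^2*(q^2-k^2)*Complex.cos (q*h0)*Complex.sin (p*z)
        - 2*k^2*p*q*Complex.cos (p*h0)*Complex.sin (q*z)))) * Complex.I_mul_I
    linear_combination key / (((lam:ℂ)+2*(mu:ℂ))) + (Complex.I*k*(u z)) * hLinv
  · -- eq2
    have key : (lam:ℂ)*(deriv ms z) - (om:ℂ)^2*(((lam:ℂ)+2*(mu:ℂ)))*(v z)
        - 4*(mu:ℂ)*((lam:ℂ)+(mu:ℂ))*(deriv (deriv v) z)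
        = Complex.I*k*(t z)*(((lam:ℂ)+2*(mu:ℂ))) := by
      rw [(hms' z).deriv, (hv'' z).deriv]; simp only [hv, ht]
      linear_combination
        (-(((lam:ℂ)+2*(mu:ℂ))*p*(q^2-k^2)*Complex.cos (q*h0)*Complex.cos (p*z))) * hom1
        + (-(((lam:ℂ)+2*(mu:ℂ))*2*k^2*p*Complex.cos (p*h0)*Complex.cos (q*z))) * hom2
        + (-(2*k^2*(mu:ℂ)*(q^2-k^2)*p*(Complex.cos (q*h0)*Complex.cos (p*z)
            - Complex.cos (p*h0)*Complex.cos (q*z))*(((lam:ℂ)+2*(mu:ℂ))))) * Complex.I_mul_I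
    linear_combination key / (((lam:ℂ)+2*(mu:ℂ)))
      + ((om:ℂ)^2*(v z) + Complex.I*k*(t z)) * hLinv
  · -- eq3
    rw [(ht' z).deriv]; simp only [hu, hms]
    linear_combination (Complex.I*k*(q^2-k^2)*Complex.cos (q*h0)*Complex.sin (p*z)) * hom1
      + (-(2*Complex.I*k*p*q*Complex.cos (p*h0)*Complex.sin (q*z))) * hom2
  · -- eq4
    have key : -(deriv u z)*(mu:ℂ) + t z = Complex.I*k*(v z)*(mu:ℂ) := by
      rw [(hu' z).deriv]; simp only [ht, hv]; ring
    linear_combination key / ((mu:ℂ)) + (deriv u z + Complex.I*k*(v z)) * hMinv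
  · simp only [ht]; ring
  · simp only [ht, Complex.ofReal_neg, mul_neg, Complex.cos_neg]; ring
  · -- B2 at h0
    have key : -((lam:ℂ))*(ms h0) + 4*(mu:ℂ)*((lam:ℂ)+(mu:ℂ))*(deriv v h0) = 0 := by
      rw [(hv' h0).deriv]; simp only [hms]
      linear_combination
        ((((lam:ℂ)+2*(mu:ℂ))*(q^2-k^2)*Complex.cos (q*h0)*Complex.sin (p*h0))) * hom1
        + (-((((lam:ℂ)+2*(mu:ℂ))*(q^2-k^2)*Complex.cos (q*h0)*Complex.sin (p*h0)))) * hom2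
        + (-((mu:ℂ)*(((lam:ℂ)+2*(mu:ℂ))))) * hRL
    linear_combination key / (((lam:ℂ)+2*(mu:ℂ)))
  · -- B2 at -h0
    have key : -((lam:ℂ))*(ms (-h0)) + 4*(mu:ℂ)*((lam:ℂ)+(mu:ℂ))*(deriv v (-h0)) = 0 := by
      rw [(hv' (-h0)).deriv]
      simp only [hms, Complex.ofReal_neg, mul_neg, Complex.sin_neg, Complex.cos_neg]
      linear_combination
        (-((((lam:ℂ)+2*(mu:ℂ))*(q^2-k^2)*Complex.cos (q*h0)*Complex.sin (p*h0)))) * hom1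
        + ((((lam:ℂ)+2*(mu:ℂ))*(q^2-k^2)*Complex.cos (q*h0)*Complex.sin (p*h0))) * hom2
        + (((mu:ℂ)*(((lam:ℂ)+2*(mu:ℂ))))) * hRL
    linear_combination key / (((lam:ℂ)+2*(mu:ℂ)))
end

section
/- Let λ, μ, ω, h ∈ ℝ with μ > 0, λ + 2μ > 0, ω > 0, h > 0. Then the set of wavenumbers k ∈ ℂ associated to Lamb modes, namely the set of k ∈ ℂ for which there exist p, q ∈ ℂ with p² = ω²/(λ+2μ) − k², q² = ω²/μ − k², and ( (q²−k²)² sin(qh) cos(ph) + 4k²pq sin(ph) cos(qh) ) · ( (q²−k²)² cos(qh) sin(ph) + 4k²pq cos(ph) sin(qh) ) = 0, is countable. -/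
open Complex Set Filter FormalMultilinearSeries
open scoped Nat Topology

noncomputable def cC : ℕ → ℂ := fun n => (-1)^n / (2*n)!
noncomputable def cS : ℕ → ℂ := fun n => (-1)^n / (2*n+1)!

noncomputable def Cf : ℂ → ℂ := ofScalarsSum cC
noncomputable def Sf : ℂ → ℂ := ofScalarsSum cS

lemma norm_cC (n : ℕ) : ‖cC n‖ = (((2*n)! : ℝ))⁻¹ := by
  simp [cC, norm_div, Complex.norm_natCast]

lemma norm_cS (n : ℕ) : ‖cS n‖ = (((2*n+1)! : ℝ))⁻¹ := by
  simp [cS, norm_div, Complex.norm_natCast]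

lemma tendsto_aux (f : ℕ → ℝ) (hf : ∀ n, 0 ≤ f n) (hb : ∀ n, f n ≤ ((n:ℝ)+1)⁻¹) :
    Tendsto f atTop (𝓝 0) := by
  refine squeeze_zero hf hb ?_
  have : Tendsto (fun n : ℕ => ((n:ℝ)+1)) atTop atTop := by
    apply tendsto_atTop_add_const_right
    exact tendsto_natCast_atTop_atTop
  exact tendsto_inv_atTop_zero.comp this

lemma ratio_cC : Tendsto (fun n => ‖cC (n+1)‖ / ‖cC n‖) atTop (𝓝 0) := by
  apply tendsto_aux
  · intro n; positivity
  · intro n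
    rw [norm_cC, norm_cC]
    rw [show 2*(n+1) = (2*n+1)+1 by ring, Nat.factorial_succ, Nat.factorial_succ]
    rw [div_eq_mul_inv, inv_inv]
    have h1 : (0:ℝ) < (2*n)! := by positivity
    have h2 : (0:ℝ) < ((n:ℝ)+1) := by positivity
    rw [inv_mul_le_iff₀ (by positivity), ← div_eq_mul_inv, le_div_iff₀ h2]
    push_cast
    have h3 : ((n:ℝ)+1) ≤ (2*(n:ℝ)+1+1)*(2*(n:ℝ)+1) := by nlinarith [Nat.cast_nonneg (α := ℝ) n]
    nlinarith [mul_le_mul_of_nonneg_left h3 h1.le]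

lemma ratio_cS : Tendsto (fun n => ‖cS (n+1)‖ / ‖cS n‖) atTop (𝓝 0) := by
  apply tendsto_aux
  · intro n; positivity
  · intro n
    rw [norm_cS, norm_cS]
    rw [show 2*(n+1)+1 = ((2*n+1)+1)+1 by ring, Nat.factorial_succ, Nat.factorial_succ]
    have h1 : (0:ℝ) < (2*n+1)! := by positivity
    have h2 : (0:ℝ) < ((n:ℝ)+1) := by positivity
    rw [div_eq_mul_inv, inv_inv, inv_mul_le_iff₀ (by positivity), ← div_eq_mul_inv, le_div_iff₀ h2]
    push_cast
    have h3 : ((n:ℝ)+1) ≤ (2*(n:ℝ)+2+1)*(2*(n:ℝ)+1+1) := by nlinarith [Nat.cast_nonneg (α := ℝ) n]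
    nlinarith [mul_le_mul_of_nonneg_left h3 h1.le]

lemma radius_cC : (ofScalars ℂ cC).radius = ⊤ :=
  ofScalars_radius_eq_top_of_tendsto ℂ cC
    (Eventually.of_forall fun n => by simp [cC, Nat.factorial_ne_zero]) ratio_cC

lemma radius_cS : (ofScalars ℂ cS).radius = ⊤ :=
  ofScalars_radius_eq_top_of_tendsto ℂ cS
    (Eventually.of_forall fun n => by
      simp only [cS, ne_eq, div_eq_zero_iff, pow_eq_zero_iff', neg_eq_zero, one_ne_zero,
        false_and, Nat.cast_eq_zero, false_or]
      exact_mod_cast Nat.factorial_ne_zero _) ratio_cS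

lemma analytic_ofScalarsSum {c : ℕ → ℂ} (h : (ofScalars ℂ c).radius = ⊤) :
    AnalyticOnNhd ℂ (ofScalarsSum (E := ℂ) c) univ := by
  intro x _
  refine ((ofScalars ℂ c).hasFPowerSeriesOnBall ?_).analyticAt_of_mem ?_
  · rw [h]; exact ENNReal.zero_lt_top
  · rw [h]; simp [EMetric.mem_ball, edist_lt_top]

lemma Cf_analytic : AnalyticOnNhd ℂ Cf univ := analytic_ofScalarsSum radius_cC
lemma Sf_analytic : AnalyticOnNhd ℂ Sf univ := analytic_ofScalarsSum radius_cS

lemma Cf_sq (z : ℂ) : Cf (z^2) = Complex.cos z := by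
  rw [Cf, ofScalars_sum_eq, ← (Complex.hasSum_cos z).tsum_eq]
  refine tsum_congr fun n => ?_
  rw [cC, smul_eq_mul, ← pow_mul]
  ring

lemma Sf_sq (z : ℂ) : z * Sf (z^2) = Complex.sin z := by
  rw [Sf, ofScalars_sum_eq, ← tsum_mul_left, ← (Complex.hasSum_sin z).tsum_eq]
  refine tsum_congr fun n => ?_
  rw [cS, smul_eq_mul, ← pow_mul, pow_succ z (2*n)]
  ring

lemma Cf_zero : Cf 0 = 1 := by
  rw [Cf, ofScalarsSum_zero]; simp [cC]

lemma Sf_zero : Sf 0 = 1 := by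
  rw [Sf, ofScalarsSum_zero]; simp [cS]

lemma countable_zeros {f : ℂ → ℂ} (hf : AnalyticOnNhd ℂ f univ) {u₀ : ℂ} (hu : f u₀ ≠ 0) :
    {z : ℂ | f z = 0}.Countable := by
  have key : ∀ n : ℕ, ({z : ℂ | f z = 0} ∩ Metric.closedBall 0 n).Finite := by
    intro n
    by_contra hfin
    have hinf : ({z : ℂ | f z = 0} ∩ Metric.closedBall 0 n).Infinite := hfin
    obtain ⟨x, -, hx⟩ := hinf.exists_accPt_of_subset_isCompact
      (isCompact_closedBall (0:ℂ) n) inter_subset_right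
    have hfreq : ∃ᶠ z in 𝓝[≠] x, f z = 0 := by
      have := accPt_iff_frequently.1 hx
      rw [frequently_nhdsWithin_iff]
      exact this.mono fun y hy => ⟨hy.2.1, hy.1⟩
    have := hf.eqOn_zero_of_preconnected_of_frequently_eq_zero isPreconnected_univ
      (mem_univ x) hfreq
    exact hu (this (mem_univ u₀))
  have hU : {z : ℂ | f z = 0} = ⋃ n : ℕ, ({z : ℂ | f z = 0} ∩ Metric.closedBall 0 n) := by
    ext z
    simp only [mem_iUnion, mem_inter_iff, mem_setOf_eq, Metric.mem_closedBall,
      dist_zero_right]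
    constructor
    · intro hz
      obtain ⟨n, hn⟩ := exists_nat_ge ‖z‖
      exact ⟨n, hz, hn⟩
    · rintro ⟨n, hn, -⟩; exact hn
  rw [hU]
  exact countable_iUnion fun n => (key n).countable

lemma countable_sq_eq (u : ℂ) : {k : ℂ | k^2 = u}.Countable := by
  obtain ⟨r, hr⟩ := IsAlgClosed.exists_pow_nat_eq u (n := 2) (by norm_num)
  refine ((Set.finite_singleton (-r)).insert r).countable.mono ?_
  intro k hk
  have h0 : (k - r) * (k + r) = 0 := by
    have hk' : k^2 = u := hk
    linear_combination hk' - hr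
  simp only [mem_insert_iff, mem_singleton_iff]
  rcases mul_eq_zero.1 h0 with h | h
  · exact Or.inl (sub_eq_zero.1 h)
  · exact Or.inr (by linear_combination h)

lemma countable_preimage_sq {Z : Set ℂ} (hZ : Z.Countable) :
    ((fun k : ℂ => k^2) ⁻¹' Z).Countable := by
  have : (fun k : ℂ => k^2) ⁻¹' Z = ⋃ u ∈ Z, {k : ℂ | k^2 = u} := by
    ext k; simp
  rw [this]
  exact hZ.biUnion fun u _ => countable_sq_eq u

noncomputable def Gf (a b h : ℝ) : ℂ → ℂ := fun u =>
  ((b:ℂ) - 2*u)^2 * Sf ((h:ℂ)^2*((b:ℂ)-u)) * Cf ((h:ℂ)^2*((a:ℂ)-u))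
  + 4*u*((a:ℂ)-u) * Sf ((h:ℂ)^2*((a:ℂ)-u)) * Cf ((h:ℂ)^2*((b:ℂ)-u))

noncomputable def Hf (a b h : ℝ) : ℂ → ℂ := fun u =>
  ((b:ℂ) - 2*u)^2 * Sf ((h:ℂ)^2*((a:ℂ)-u)) * Cf ((h:ℂ)^2*((b:ℂ)-u))
  + 4*u*((b:ℂ)-u) * Sf ((h:ℂ)^2*((b:ℂ)-u)) * Cf ((h:ℂ)^2*((a:ℂ)-u))

lemma inner_analytic (h c : ℝ) :
    AnalyticOnNhd ℂ (fun u : ℂ => (h:ℂ)^2*((c:ℂ)-u)) univ :=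
  analyticOnNhd_const.mul (analyticOnNhd_const.sub analyticOnNhd_id)

lemma Gf_analytic (a b h : ℝ) : AnalyticOnNhd ℂ (Gf a b h) univ := by
  unfold Gf
  exact
    ((((analyticOnNhd_const.sub (analyticOnNhd_const.mul analyticOnNhd_id)).pow 2).mul
      (Sf_analytic.comp (inner_analytic h b) (mapsTo_univ _ _))).mul
      (Cf_analytic.comp (inner_analytic h a) (mapsTo_univ _ _))).add
    ((((analyticOnNhd_const.mul analyticOnNhd_id).mul
        (analyticOnNhd_const.sub analyticOnNhd_id)).mul
      (Sf_analytic.comp (inner_analytic h a) (mapsTo_univ _ _))).mul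
      (Cf_analytic.comp (inner_analytic h b) (mapsTo_univ _ _)))

lemma Hf_analytic (a b h : ℝ) : AnalyticOnNhd ℂ (Hf a b h) univ := by
  unfold Hf
  exact
    ((((analyticOnNhd_const.sub (analyticOnNhd_const.mul analyticOnNhd_id)).pow 2).mul
      (Sf_analytic.comp (inner_analytic h a) (mapsTo_univ _ _))).mul
      (Cf_analytic.comp (inner_analytic h b) (mapsTo_univ _ _))).add
    ((((analyticOnNhd_const.mul analyticOnNhd_id).mul
        (analyticOnNhd_const.sub analyticOnNhd_id)).mul
      (Sf_analytic.comp (inner_analytic h b) (mapsTo_univ _ _))).mul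
      (Cf_analytic.comp (inner_analytic h a) (mapsTo_univ _ _)))

open Real in
lemma Sf_ne_zero_aux (c : ℝ) (n : ℕ) (hc : c ≠ 0) (h1 : |c| + 1 ≤ n*π^2) :
    Sf (((c + n^2*π^2 : ℝ)):ℂ) ≠ 0 := by
  intro hS
  have hπ := Real.pi_pos
  have hn1 : 1 ≤ (n:ℝ) := by
    have : n ≠ 0 := by
      intro h0
      rw [h0] at h1; push_cast at h1
      nlinarith [abs_nonneg c]
    exact_mod_cast Nat.one_le_iff_ne_zero.2 this
  have hw : 0 < c + n^2*π^2 := by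
    nlinarith [neg_abs_le c, mul_nonneg (mul_nonneg (Nat.cast_nonneg (α := ℝ) n) (sq_nonneg π))
      (sub_nonneg.2 hn1)]
  set z := Real.sqrt (c + n^2*π^2) with hzdef
  have hz : 0 < z := Real.sqrt_pos.2 hw
  have hz2 : z^2 = c + n^2*π^2 := Real.sq_sqrt hw.le
  have hsc : Complex.sin (z:ℂ) = 0 := by
    have h := Sf_sq (z:ℂ)
    rw [show ((z:ℂ))^2 = (((c + n^2*π^2 : ℝ)):ℂ) by rw [← Complex.ofReal_pow, hz2],
      hS, mul_zero] at h
    exact h.symm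
  have hsr : Real.sin z = 0 := by exact_mod_cast (Complex.ofReal_sin z).trans hsc
  obtain ⟨m, hm⟩ := Real.sin_eq_zero_iff.1 hsr
  have hm1 : 1 ≤ m := by
    have hm0 : (0:ℝ) < (m:ℝ) := by nlinarith
    have : 0 < m := by exact_mod_cast hm0
    omega
  have hm1R : (1:ℝ) ≤ (m:ℝ) := by exact_mod_cast hm1
  have hz2' : ((m:ℝ)*π)^2 = c + n^2*π^2 := by rw [hm, hz2]
  have hckey : c = ((m:ℝ)^2 - (n:ℝ)^2)*π^2 := by nlinarith [hz2']
  have hmn : m ≠ (n:ℤ) := by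
    intro he
    apply hc
    rw [he] at hckey
    push_cast at hckey
    simpa using hckey
  have habs : ((n:ℤ) + m : ℤ) ≤ |m^2 - (n:ℤ)^2| := by
    have h2 : |m^2 - (n:ℤ)^2| = |m - n| * |m + n| := by
      rw [← abs_mul]; ring_nf
    have h3 : 1 ≤ |m - (n:ℤ)| := Int.one_le_abs (sub_ne_zero.2 hmn)
    have h4 : |m + (n:ℤ)| = m + n := abs_of_pos (by omega)
    rw [h2, h4]
    nlinarith [h3, hm1, Int.natCast_nonneg n]
  have habsR : ((n:ℝ) + (m:ℝ)) ≤ |(m:ℝ)^2 - (n:ℝ)^2| := by exact_mod_cast habs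
  have hge : ((n:ℝ)+(m:ℝ))*π^2 ≤ |c| := by
    rw [hckey, abs_mul, abs_of_pos (pow_pos hπ 2)]
    exact mul_le_mul_of_nonneg_right habsR (sq_nonneg π)
  nlinarith [mul_le_mul_of_nonneg_right hm1R (sq_nonneg π), sq_nonneg π]

open Real in
lemma Sf_npi (n : ℕ) (hn : n ≠ 0) : Sf (((((n:ℝ)*π)^2 : ℝ)):ℂ) = 0 := by
  have hz : ((((n:ℝ)*π : ℝ)):ℂ) ≠ 0 := by
    simp only [ne_eq, Complex.ofReal_eq_zero, mul_eq_zero, Nat.cast_eq_zero, not_or]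
    exact ⟨hn, Real.pi_ne_zero⟩
  have h := Sf_sq ((((n:ℝ)*π : ℝ)):ℂ)
  rw [show ((((n:ℝ)*π : ℝ)):ℂ)^2 = (((((n:ℝ)*π)^2 : ℝ)):ℂ) by push_cast; ring] at h
  have hsin : Complex.sin ((((n:ℝ)*π : ℝ)):ℂ) = 0 := by
    rw [← Complex.ofReal_sin, Real.sin_nat_mul_pi]
    simp
  rw [hsin] at h
  exact (mul_eq_zero.1 h).resolve_left hz

open Real in
lemma Cf_npi (n : ℕ) : Cf (((((n:ℝ)*π)^2 : ℝ)):ℂ) ≠ 0 := by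
  have h := Cf_sq ((((n:ℝ)*π : ℝ)):ℂ)
  rw [show ((((n:ℝ)*π : ℝ)):ℂ)^2 = (((((n:ℝ)*π)^2 : ℝ)):ℂ) by push_cast; ring] at h
  rw [h, ← Complex.ofReal_cos]
  simp only [ne_eq, Complex.ofReal_eq_zero]
  have hpy := Real.sin_sq_add_cos_sq ((n:ℝ)*π)
  rw [Real.sin_nat_mul_pi] at hpy
  intro h0
  rw [h0] at hpy
  norm_num at hpy

open Real in
lemma GH_ne (a b h : ℝ) (hh : 0 < h) (hb : b ≠ 0) :
    (∃ u : ℂ, Gf a b h u ≠ 0) ∧ (∃ u : ℂ, Hf a b h u ≠ 0) := by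
  rcases eq_or_ne a b with rfl | hab
  · have e1 : (h:ℂ)^2*((a:ℂ)-((a:ℝ):ℂ)) = 0 := by ring
    have hbne : ((a:ℝ):ℂ) ≠ 0 := Complex.ofReal_ne_zero.2 hb
    constructor
    · refine ⟨((a:ℝ):ℂ), ?_⟩
      have : Gf a a h ((a:ℝ):ℂ) = ((a:ℝ):ℂ)^2 := by
        simp only [Gf]
        rw [e1, Sf_zero, Cf_zero]
        ring
      rw [this]
      exact pow_ne_zero 2 hbne
    · refine ⟨((a:ℝ):ℂ), ?_⟩
      have : Hf a a h ((a:ℝ):ℂ) = ((a:ℝ):ℂ)^2 := by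
        simp only [Hf]
        rw [e1, Sf_zero, Cf_zero]
        ring
      rw [this]
      exact pow_ne_zero 2 hbne
  · set c : ℝ := h^2*(b-a) with hcdef
    have hπ := Real.pi_pos
    have h2 : (0:ℝ) < h^2 := by positivity
    have hc : c ≠ 0 := mul_ne_zero (pow_ne_zero 2 hh.ne') (sub_ne_zero.2 (Ne.symm hab))
    obtain ⟨n, hn⟩ := exists_nat_gt ((|c| + 1 + 3*(|a|+|b|)*h^2) / π^2)
    rw [div_lt_iff₀ (by positivity)] at hn
    have hnπ : |c| + 1 + 3*(|a|+|b|)*h^2 < n * π^2 := by linarith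
    have hn0 : n ≠ 0 := by
      intro h0
      rw [h0] at hnπ
      push_cast at hnπ
      nlinarith [abs_nonneg c, abs_nonneg a, abs_nonneg b, sq_nonneg h]
    have hn1 : 1 ≤ (n:ℝ) := by exact_mod_cast Nat.one_le_iff_ne_zero.2 hn0
    have hnsq : (n:ℝ) ≤ (n:ℝ)^2 := by nlinarith
    have hnn : (n:ℝ)*π^2 ≤ (n:ℝ)^2*π^2 := mul_le_mul_of_nonneg_right hnsq (sq_nonneg π)
    set u : ℝ := a - ((n:ℝ)*π/h)^2 with hu
    have habs3 : (0:ℝ) ≤ 3*(|a|+|b|)*h^2 := by positivity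
    have hkey : 3*(|a|+|b|) < (n:ℝ)^2*π^2/h^2 := by
      rw [lt_div_iff₀ h2]
      nlinarith [abs_nonneg c]
    have hu' : u = a - (n:ℝ)^2*π^2/h^2 := by
      rw [hu]
      congr 1
      field_simp
    have hBpos : 0 < b - 2*u := by
      rw [hu']
      linarith [neg_abs_le b, le_abs_self a, abs_nonneg a, abs_nonneg b, hkey]
    have huneg : u < 0 := by
      rw [hu']
      linarith [le_abs_self a, abs_nonneg a, abs_pos.mpr hb, hkey]
    have hbu : 0 < b - u := by
      rw [hu']
      linarith [le_abs_self a, neg_abs_le b, abs_nonneg a, abs_nonneg b, hkey]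
    have hAc : |c| + 1 ≤ n*π^2 := by linarith
    have hA : (h:ℂ)^2*((a:ℂ)-((u:ℝ):ℂ)) = (((((n:ℝ)*π)^2 : ℝ)):ℂ) := by
      rw [show (h:ℂ)^2*((a:ℂ)-((u:ℝ):ℂ)) = ((h^2*(a-u) : ℝ):ℂ) by push_cast; ring]
      congr 1
      rw [hu]
      field_simp
      ring
    have hB : (h:ℂ)^2*((b:ℂ)-((u:ℝ):ℂ)) = ((c + (n:ℝ)^2*π^2 : ℝ):ℂ) := by
      rw [show (h:ℂ)^2*((b:ℂ)-((u:ℝ):ℂ)) = ((h^2*(b-u) : ℝ):ℂ) by push_cast; ring]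
      congr 1
      rw [hu', hcdef]
      field_simp
      ring
    have hSb : Sf (((c + (n:ℝ)^2*π^2 : ℝ)):ℂ) ≠ 0 := by
      exact Sf_ne_zero_aux c n hc hAc
    have hSa := Sf_npi n hn0
    have hCa := Cf_npi n
    have hbuC : ((b:ℂ) - 2*((u:ℝ):ℂ)) ≠ 0 := by
      rw [show (b:ℂ)-2*((u:ℝ):ℂ) = ((b - 2*u : ℝ):ℂ) by push_cast; ring]
      exact Complex.ofReal_ne_zero.2 hBpos.ne'
    have huC : ((u:ℝ):ℂ) ≠ 0 := Complex.ofReal_ne_zero.2 huneg.ne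
    have hbuC2 : ((b:ℂ) - ((u:ℝ):ℂ)) ≠ 0 := by
      rw [show (b:ℂ)-((u:ℝ):ℂ) = ((b - u : ℝ):ℂ) by push_cast; ring]
      exact Complex.ofReal_ne_zero.2 hbu.ne'
    constructor
    · refine ⟨((u:ℝ):ℂ), ?_⟩
      simp only [Gf]
      rw [hA, hB, hSa, mul_zero, zero_mul, add_zero]
      exact mul_ne_zero (mul_ne_zero (pow_ne_zero 2 hbuC) hSb) hCa
    · refine ⟨((u:ℝ):ℂ), ?_⟩
      simp only [Hf]
      rw [hA, hB, hSa, mul_zero, zero_mul, zero_add]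
      exact mul_ne_zero (mul_ne_zero (mul_ne_zero (mul_ne_zero (by norm_num) huC) hbuC2) hSb) hCa

/-- **Countability of the Lamb spectrum.** For Lamé parameters `mu > 0`, `lam + 2mu > 0`,
frequency `om > 0` and half-width `h0 > 0`, the set of wavenumbers `k ∈ ℂ` associated to
Lamb modes, i.e. the `k` satisfying the symmetric or the antisymmetric Rayleigh–Lamb
equation (in product form), is countable. -/
theorem lamb_wavenumbers_countable
    (lam mu om h0 : ℝ) (hmu : 0 < mu) (hlm : 0 < lam + 2*mu) (hom : 0 < om) (hh : 0 < h0) :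
    Set.Countable {k : ℂ | ∃ p q : ℂ,
      p^2 = (om:ℂ)^2/((lam:ℂ)+2*(mu:ℂ)) - k^2
      ∧ q^2 = (om:ℂ)^2/(mu:ℂ) - k^2
      ∧ ((q^2-k^2)^2 * Complex.sin (q*h0) * Complex.cos (p*h0)
            + 4*k^2*p*q*Complex.sin (p*h0) * Complex.cos (q*h0))
        * ((q^2-k^2)^2 * Complex.cos (q*h0) * Complex.sin (p*h0)
            + 4*k^2*p*q*Complex.cos (p*h0) * Complex.sin (q*h0)) = 0} := by
  set a : ℝ := om^2/(lam+2*mu) with hadef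
  set b : ℝ := om^2/mu with hbdef
  have hca : (om:ℂ)^2/((lam:ℂ)+2*(mu:ℂ)) = ((a:ℝ):ℂ) := by
    rw [hadef]; push_cast; ring
  have hcb : (om:ℂ)^2/(mu:ℂ) = ((b:ℝ):ℂ) := by
    rw [hbdef]; push_cast; ring
  have hb0 : b ≠ 0 := ne_of_gt (div_pos (pow_pos hom 2) hmu)
  obtain ⟨⟨uG, hG⟩, ⟨uH, hH⟩⟩ := GH_ne a b h0 hh hb0
  have hGc : {z : ℂ | Gf a b h0 z = 0}.Countable :=
    countable_zeros (Gf_analytic a b h0) hG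
  have hHc : {z : ℂ | Hf a b h0 z = 0}.Countable :=
    countable_zeros (Hf_analytic a b h0) hH
  refine Set.Countable.mono ?_
    ((((countable_sq_eq ((a:ℝ):ℂ)).union (countable_sq_eq ((b:ℝ):ℂ))).union
      (countable_preimage_sq hGc)).union (countable_preimage_sq hHc))
  rintro k ⟨p, q, hp, hq, heq⟩
  rw [hca] at hp
  rw [hcb] at hq
  have hh0C : ((h0:ℝ):ℂ) ≠ 0 := Complex.ofReal_ne_zero.2 hh.ne'
  have hsq : Complex.sin (q*(h0:ℂ)) = q*(h0:ℂ) * Sf ((h0:ℂ)^2*(((b:ℝ):ℂ)-k^2)) := by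
    have hs := Sf_sq (q*(h0:ℂ))
    rw [show (q*(h0:ℂ))^2 = (h0:ℂ)^2*(((b:ℝ):ℂ)-k^2) by rw [mul_pow, hq]; ring] at hs
    exact hs.symm
  have hsp : Complex.sin (p*(h0:ℂ)) = p*(h0:ℂ) * Sf ((h0:ℂ)^2*(((a:ℝ):ℂ)-k^2)) := by
    have hs := Sf_sq (p*(h0:ℂ))
    rw [show (p*(h0:ℂ))^2 = (h0:ℂ)^2*(((a:ℝ):ℂ)-k^2) by rw [mul_pow, hp]; ring] at hs
    exact hs.symm
  have hcq : Complex.cos (q*(h0:ℂ)) = Cf ((h0:ℂ)^2*(((b:ℝ):ℂ)-k^2)) := by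
    have hs := Cf_sq (q*(h0:ℂ))
    rw [show (q*(h0:ℂ))^2 = (h0:ℂ)^2*(((b:ℝ):ℂ)-k^2) by rw [mul_pow, hq]; ring] at hs
    exact hs.symm
  have hcp : Complex.cos (p*(h0:ℂ)) = Cf ((h0:ℂ)^2*(((a:ℝ):ℂ)-k^2)) := by
    have hs := Cf_sq (p*(h0:ℂ))
    rw [show (p*(h0:ℂ))^2 = (h0:ℂ)^2*(((a:ℝ):ℂ)-k^2) by rw [mul_pow, hp]; ring] at hs
    exact hs.symm
  rw [hsq, hsp, hcq, hcp] at heq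
  set SA := Sf ((h0:ℂ)^2*(((a:ℝ):ℂ)-k^2)) with hSA
  set SB := Sf ((h0:ℂ)^2*(((b:ℝ):ℂ)-k^2)) with hSB
  set CA := Cf ((h0:ℂ)^2*(((a:ℝ):ℂ)-k^2)) with hCA
  set CB := Cf ((h0:ℂ)^2*(((b:ℝ):ℂ)-k^2)) with hCB
  have key : (q*(h0:ℂ)*Gf a b h0 (k^2)) * (p*(h0:ℂ)*Hf a b h0 (k^2)) = 0 := by
    have hfac1 : (q^2-k^2)^2 * (q*(h0:ℂ)*SB) * CA + 4*k^2*p*q*(p*(h0:ℂ)*SA)*CB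
        = q*(h0:ℂ)*Gf a b h0 (k^2) := by
      simp only [Gf, ← hSA, ← hSB, ← hCA, ← hCB]
      linear_combination (SB*CA*q*(h0:ℂ)*((q^2-k^2)+(((b:ℝ):ℂ)-2*k^2)))*hq
        + (4*k^2*q*(h0:ℂ)*SA*CB)*hp
    have hfac2 : (q^2-k^2)^2 * CB * (p*(h0:ℂ)*SA) + 4*k^2*p*q*CA*(q*(h0:ℂ)*SB)
        = p*(h0:ℂ)*Hf a b h0 (k^2) := by
      simp only [Hf, ← hSA, ← hSB, ← hCA, ← hCB]
      linear_combination (p*(h0:ℂ)*SA*CB*((q^2-k^2)+(((b:ℝ):ℂ)-2*k^2))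
        + 4*k^2*p*(h0:ℂ)*SB*CA)*hq
    rw [← hfac1, ← hfac2]
    exact heq
  simp only [mem_union, mem_setOf_eq, mem_preimage]
  rcases mul_eq_zero.1 key with hz | hz
  · rcases mul_eq_zero.1 hz with hz' | hz'
    · rcases mul_eq_zero.1 hz' with hz'' | hz''
      · -- q = 0
        left; left; right
        have : (0:ℂ) = ((b:ℝ):ℂ) - k^2 := by
          rw [← hq, hz'']
          ring
        linear_combination this
      · exact absurd hz'' hh0C
    · left; right
      exact hz'
  · rcases mul_eq_zero.1 hz with hz' | hz'
    · rcases mul_eq_zero.1 hz' with hz'' | hz''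
      · -- p = 0
        left; left; left
        have : (0:ℂ) = ((a:ℝ):ℂ) - k^2 := by
          rw [← hp, hz'']
          ring
        linear_combination this
      · exact absurd hz'' hh0C
    · right
      exact hz'
end

section
/- Let λ, μ, ω, h ∈ ℝ with μ > 0, λ + 2μ > 0, h > 0. Let (X¹, Y¹) and (X², Y²) be pairs of C² functions [−h,h] → ℂ² satisfying F(Yʲ) = ikⱼ Xʲ and G(Xʲ) = ikⱼ Yʲ on [−h,h], with boundary conditions B₁(Xʲ)(±h) = 0 and B₂(Yʲ)(±h) = 0, for j = 1, 2, where k₁, k₂ ∈ ℂ satisfy k₁² ≠ k₂². Then the bi-orthogonality relation holds: ⟨X¹, Y²⟩ = ∫_{−h}^{h} ( X¹₁(z) Y²₁(z) + X¹₂(z) Y²₂(z) ) dz = 0. -/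
open Complex Set intervalIntegral

private lemma cd_deriv {f : ℝ → ℂ} (hf : ContDiff ℝ 2 f) : ContDiff ℝ 1 (deriv f) := by
  have : ContDiff ℝ (1+1) f := by norm_num; exact hf
  exact (contDiff_succ_iff_deriv.mp this).2.2

private lemma hd_at {f : ℝ → ℂ} (hf : ContDiff ℝ 2 f) (x : ℝ) :
    HasDerivAt f (deriv f x) x :=
  ((hf.differentiable two_ne_zero) x).hasDerivAt

private lemma hd_at' {f : ℝ → ℂ} (hf : ContDiff ℝ 2 f) (x : ℝ) :
    HasDerivAt (deriv f) (deriv (deriv f) x) x :=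
  (((cd_deriv hf).differentiable one_ne_zero) x).hasDerivAt

/-- Symmetry of the operator `F` under the bilinear pairing, given `B₂` boundary conditions. -/
private lemma keyF (h0 : ℝ) (c d e om : ℂ)
    (A1 A2 B1 B2 : ℝ → ℂ)
    (hA1 : ContDiff ℝ 2 A1) (hA2 : ContDiff ℝ 2 A2)
    (hB1 : ContDiff ℝ 2 B1) (hB2 : ContDiff ℝ 2 B2)
    (bA1 : -c * A1 h0 + d * deriv A2 h0 = 0)
    (bA2 : -c * A1 (-h0) + d * deriv A2 (-h0) = 0)
    (bB1 : -c * B1 h0 + d * deriv B2 h0 = 0)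
    (bB2 : -c * B1 (-h0) + d * deriv B2 (-h0) = 0) :
    ∫ z in (-h0)..h0, ((-(A1 z)/e - c * deriv A2 z) * B1 z
        + (c * deriv A1 z - om^2 * A2 z - d * deriv (deriv A2) z) * B2 z)
    = ∫ z in (-h0)..h0, ((-(B1 z)/e - c * deriv B2 z) * A1 z
        + (c * deriv B1 z - om^2 * B2 z - d * deriv (deriv B2) z) * A2 z) := by
  have cA1 : Continuous A1 := hA1.continuous
  have cA2 : Continuous A2 := hA2.continuous
  have cB1 : Continuous B1 := hB1.continuous
  have cB2 : Continuous B2 := hB2.continuous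
  have cdA1 : Continuous (deriv A1) := (cd_deriv hA1).continuous
  have cdA2 : Continuous (deriv A2) := (cd_deriv hA2).continuous
  have cdB1 : Continuous (deriv B1) := (cd_deriv hB1).continuous
  have cdB2 : Continuous (deriv B2) := (cd_deriv hB2).continuous
  have cddA2 : Continuous (deriv (deriv A2)) := (cd_deriv hA2).continuous_deriv le_rfl
  have cddB2 : Continuous (deriv (deriv B2)) := (cd_deriv hB2).continuous_deriv le_rfl
  have hi1 : IntervalIntegrable (fun z => (-(A1 z)/e - c * deriv A2 z) * B1 z
      + (c * deriv A1 z - om^2 * A2 z - d * deriv (deriv A2) z) * B2 z)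
      MeasureTheory.volume (-h0) h0 := (by fun_prop : Continuous _).intervalIntegrable _ _
  have hi2 : IntervalIntegrable (fun z => (-(B1 z)/e - c * deriv B2 z) * A1 z
      + (c * deriv B1 z - om^2 * B2 z - d * deriv (deriv B2) z) * A2 z)
      MeasureTheory.volume (-h0) h0 := (by fun_prop : Continuous _).intervalIntegrable _ _
  rw [← sub_eq_zero, ← intervalIntegral.integral_sub hi1 hi2]
  set W : ℝ → ℂ := fun z => c * (A1 z * B2 z) - c * (B1 z * A2 z)
      - d * (deriv A2 z * B2 z) + d * (deriv B2 z * A2 z) with hW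
  set W' : ℝ → ℂ := fun z => (c * (deriv A1 z * B2 z + A1 z * deriv B2 z)
      - c * (deriv B1 z * A2 z + B1 z * deriv A2 z)
      - d * (deriv (deriv A2) z * B2 z + deriv A2 z * deriv B2 z))
      + d * (deriv (deriv B2) z * A2 z + deriv B2 z * deriv A2 z) with hW'
  have hWd : ∀ x ∈ Set.uIcc (-h0) h0, HasDerivAt W (W' x) x := by
    intro x _
    exact (((((hd_at hA1 x).mul (hd_at hB2 x)).const_mul c).sub
        (((hd_at hB1 x).mul (hd_at hA2 x)).const_mul c)).sub
        (((hd_at' hA2 x).mul (hd_at hB2 x)).const_mul d)).add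
        (((hd_at' hB2 x).mul (hd_at hA2 x)).const_mul d)
  have hiW' : IntervalIntegrable W' MeasureTheory.volume (-h0) h0 := by
    rw [hW']; exact (by fun_prop : Continuous _).intervalIntegrable _ _
  have h1 : (∫ z in (-h0)..h0, (((-(A1 z)/e - c * deriv A2 z) * B1 z
        + (c * deriv A1 z - om^2 * A2 z - d * deriv (deriv A2) z) * B2 z)
      - ((-(B1 z)/e - c * deriv B2 z) * A1 z
        + (c * deriv B1 z - om^2 * B2 z - d * deriv (deriv B2) z) * A2 z)))
      = ∫ z in (-h0)..h0, W' z := by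
    apply intervalIntegral.integral_congr
    intro z _
    simp only [hW']
    ring
  rw [h1, intervalIntegral.integral_eq_sub_of_hasDerivAt hWd hiW']
  simp only [hW]
  linear_combination (-(B2 h0)) * bA1 + (A2 h0) * bB1 + (B2 (-h0)) * bA2 - (A2 (-h0)) * bB2

/-- Symmetry of the operator `G` under the bilinear pairing, given `B₁` boundary conditions. -/
private lemma keyG (h0 : ℝ) (om mu : ℂ)
    (A1 A2 B1 B2 : ℝ → ℂ)
    (hA1 : ContDiff ℝ 2 A1) (hA2 : ContDiff ℝ 2 A2)
    (hB1 : ContDiff ℝ 2 B1) (hB2 : ContDiff ℝ 2 B2)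
    (bA1 : A2 h0 = 0) (bA2 : A2 (-h0) = 0)
    (bB1 : B2 h0 = 0) (bB2 : B2 (-h0) = 0) :
    ∫ z in (-h0)..h0, ((om^2 * A1 z + deriv A2 z) * B1 z
        + (-(deriv A1 z) + A2 z/mu) * B2 z)
    = ∫ z in (-h0)..h0, ((om^2 * B1 z + deriv B2 z) * A1 z
        + (-(deriv B1 z) + B2 z/mu) * A2 z) := by
  have cA1 : Continuous A1 := hA1.continuous
  have cA2 : Continuous A2 := hA2.continuous
  have cB1 : Continuous B1 := hB1.continuous
  have cB2 : Continuous B2 := hB2.continuous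
  have cdA1 : Continuous (deriv A1) := (cd_deriv hA1).continuous
  have cdA2 : Continuous (deriv A2) := (cd_deriv hA2).continuous
  have cdB1 : Continuous (deriv B1) := (cd_deriv hB1).continuous
  have cdB2 : Continuous (deriv B2) := (cd_deriv hB2).continuous
  have hi1 : IntervalIntegrable (fun z => (om^2 * A1 z + deriv A2 z) * B1 z
      + (-(deriv A1 z) + A2 z/mu) * B2 z)
      MeasureTheory.volume (-h0) h0 := (by fun_prop : Continuous _).intervalIntegrable _ _
  have hi2 : IntervalIntegrable (fun z => (om^2 * B1 z + deriv B2 z) * A1 z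
      + (-(deriv B1 z) + B2 z/mu) * A2 z)
      MeasureTheory.volume (-h0) h0 := (by fun_prop : Continuous _).intervalIntegrable _ _
  rw [← sub_eq_zero, ← intervalIntegral.integral_sub hi1 hi2]
  set W : ℝ → ℂ := fun z => A2 z * B1 z - A1 z * B2 z with hW
  set W' : ℝ → ℂ := fun z => (deriv A2 z * B1 z + A2 z * deriv B1 z)
      - (deriv A1 z * B2 z + A1 z * deriv B2 z) with hW'
  have hWd : ∀ x ∈ Set.uIcc (-h0) h0, HasDerivAt W (W' x) x := by
    intro x _
    exact ((hd_at hA2 x).mul (hd_at hB1 x)).sub ((hd_at hA1 x).mul (hd_at hB2 x))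
  have hiW' : IntervalIntegrable W' MeasureTheory.volume (-h0) h0 := by
    rw [hW']; exact (by fun_prop : Continuous _).intervalIntegrable _ _
  have h1 : (∫ z in (-h0)..h0, (((om^2 * A1 z + deriv A2 z) * B1 z
        + (-(deriv A1 z) + A2 z/mu) * B2 z)
      - ((om^2 * B1 z + deriv B2 z) * A1 z
        + (-(deriv B1 z) + B2 z/mu) * A2 z)))
      = ∫ z in (-h0)..h0, W' z := by
    apply intervalIntegral.integral_congr
    intro z _
    simp only [hW']
    ring
  rw [h1, intervalIntegral.integral_eq_sub_of_hasDerivAt hWd hiW']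
  simp only [hW, bA1, bA2, bB1, bB2]
  ring

/-- **Bi-orthogonality of Lamb modes.** If `(X¹, Y¹)` and `(X², Y²)` are Lamb modes with
wavenumbers `k₁, k₂` satisfying `k₁² ≠ k₂²` (i.e. `F(Yʲ) = ikⱼXʲ`, `G(Xʲ) = ikⱼYʲ` on
`[-h0, h0]` with boundary conditions `B₁(Xʲ)(±h0) = B₂(Yʲ)(±h0) = 0`), then
`⟨X¹, Y²⟩ = ∫_{-h0}^{h0} (X¹₁ Y²₁ + X¹₂ Y²₂) = 0`. -/
theorem lamb_modes_biorthogonality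
    (lam mu om h0 : ℝ) (hmu : 0 < mu) (hlm : 0 < lam + 2*mu) (hh : 0 < h0)
    (k₁ k₂ : ℂ) (hk : k₁^2 ≠ k₂^2)
    (X11 X12 Y11 Y12 X21 X22 Y21 Y22 : ℝ → ℂ)
    (hX11 : ContDiff ℝ 2 X11) (hX12 : ContDiff ℝ 2 X12)
    (hY11 : ContDiff ℝ 2 Y11) (hY12 : ContDiff ℝ 2 Y12)
    (hX21 : ContDiff ℝ 2 X21) (hX22 : ContDiff ℝ 2 X22)
    (hY21 : ContDiff ℝ 2 Y21) (hY22 : ContDiff ℝ 2 Y22)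
    (hF1 : ∀ z ∈ Set.Icc (-h0) h0,
        -(Y11 z)/((lam:ℂ)+2*(mu:ℂ)) - ((lam:ℂ)/((lam:ℂ)+2*(mu:ℂ))) * deriv Y12 z
          = Complex.I*k₁*X11 z
        ∧ ((lam:ℂ)/((lam:ℂ)+2*(mu:ℂ))) * deriv Y11 z - (om:ℂ)^2 * Y12 z
            - ((4*(mu:ℂ)*((lam:ℂ)+(mu:ℂ)))/((lam:ℂ)+2*(mu:ℂ))) * deriv (deriv Y12) z
          = Complex.I*k₁*X12 z)
    (hG1 : ∀ z ∈ Set.Icc (-h0) h0,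
        (om:ℂ)^2 * X11 z + deriv X12 z = Complex.I*k₁*Y11 z
        ∧ -(deriv X11 z) + X12 z/(mu:ℂ) = Complex.I*k₁*Y12 z)
    (hF2 : ∀ z ∈ Set.Icc (-h0) h0,
        -(Y21 z)/((lam:ℂ)+2*(mu:ℂ)) - ((lam:ℂ)/((lam:ℂ)+2*(mu:ℂ))) * deriv Y22 z
          = Complex.I*k₂*X21 z
        ∧ ((lam:ℂ)/((lam:ℂ)+2*(mu:ℂ))) * deriv Y21 z - (om:ℂ)^2 * Y22 z
            - ((4*(mu:ℂ)*((lam:ℂ)+(mu:ℂ)))/((lam:ℂ)+2*(mu:ℂ))) * deriv (deriv Y22) z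
          = Complex.I*k₂*X22 z)
    (hG2 : ∀ z ∈ Set.Icc (-h0) h0,
        (om:ℂ)^2 * X21 z + deriv X22 z = Complex.I*k₂*Y21 z
        ∧ -(deriv X21 z) + X22 z/(mu:ℂ) = Complex.I*k₂*Y22 z)
    (hB11 : X12 h0 = 0 ∧ X12 (-h0) = 0)
    (hB12 : -((lam:ℂ)/((lam:ℂ)+2*(mu:ℂ))) * Y11 h0
            + ((4*(mu:ℂ)*((lam:ℂ)+(mu:ℂ)))/((lam:ℂ)+2*(mu:ℂ))) * deriv Y12 h0 = 0
          ∧ -((lam:ℂ)/((lam:ℂ)+2*(mu:ℂ))) * Y11 (-h0)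
            + ((4*(mu:ℂ)*((lam:ℂ)+(mu:ℂ)))/((lam:ℂ)+2*(mu:ℂ))) * deriv Y12 (-h0) = 0)
    (hB21 : X22 h0 = 0 ∧ X22 (-h0) = 0)
    (hB22 : -((lam:ℂ)/((lam:ℂ)+2*(mu:ℂ))) * Y21 h0
            + ((4*(mu:ℂ)*((lam:ℂ)+(mu:ℂ)))/((lam:ℂ)+2*(mu:ℂ))) * deriv Y22 h0 = 0
          ∧ -((lam:ℂ)/((lam:ℂ)+2*(mu:ℂ))) * Y21 (-h0)
            + ((4*(mu:ℂ)*((lam:ℂ)+(mu:ℂ)))/((lam:ℂ)+2*(mu:ℂ))) * deriv Y22 (-h0) = 0) :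
    ∫ z in (-h0)..h0, (X11 z * Y21 z + X12 z * Y22 z) = 0 := by
  have hle : (-h0) ≤ h0 := by linarith
  have huIcc : Set.uIcc (-h0) h0 = Set.Icc (-h0) h0 := Set.uIcc_of_le hle
  set c : ℂ := (lam:ℂ)/((lam:ℂ)+2*(mu:ℂ)) with hc
  set d : ℂ := (4*(mu:ℂ)*((lam:ℂ)+(mu:ℂ)))/((lam:ℂ)+2*(mu:ℂ)) with hd
  set e : ℂ := (lam:ℂ)+2*(mu:ℂ) with he
  set A : ℂ := ∫ z in (-h0)..h0, (X11 z * Y21 z + X12 z * Y22 z) with hA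
  set B : ℂ := ∫ z in (-h0)..h0, (X21 z * Y11 z + X22 z * Y12 z) with hB
  have e1 : Complex.I * k₁ * A = Complex.I * k₂ * B := by
    rw [hA, hB, ← intervalIntegral.integral_const_mul, ← intervalIntegral.integral_const_mul]
    calc
      (∫ z in (-h0)..h0, Complex.I * k₁ * (X11 z * Y21 z + X12 z * Y22 z))
          = ∫ z in (-h0)..h0, ((-(Y11 z)/e - c * deriv Y12 z) * Y21 z
            + (c * deriv Y11 z - (om:ℂ)^2 * Y12 z - d * deriv (deriv Y12) z) * Y22 z) := by
        apply intervalIntegral.integral_congr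
        intro z hz
        obtain ⟨h1, h2⟩ := hF1 z (huIcc ▸ hz)
        linear_combination (-(Y21 z)) * h1 + (-(Y22 z)) * h2
      _ = ∫ z in (-h0)..h0, ((-(Y21 z)/e - c * deriv Y22 z) * Y11 z
            + (c * deriv Y21 z - (om:ℂ)^2 * Y22 z - d * deriv (deriv Y22) z) * Y12 z) :=
        keyF h0 c d e om Y11 Y12 Y21 Y22 hY11 hY12 hY21 hY22
          hB12.1 hB12.2 hB22.1 hB22.2
      _ = ∫ z in (-h0)..h0, Complex.I * k₂ * (X21 z * Y11 z + X22 z * Y12 z) := by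
        apply intervalIntegral.integral_congr
        intro z hz
        obtain ⟨h1, h2⟩ := hF2 z (huIcc ▸ hz)
        linear_combination (Y11 z) * h1 + (Y12 z) * h2
  have e2 : Complex.I * k₁ * B = Complex.I * k₂ * A := by
    rw [hA, hB, ← intervalIntegral.integral_const_mul, ← intervalIntegral.integral_const_mul]
    calc
      (∫ z in (-h0)..h0, Complex.I * k₁ * (X21 z * Y11 z + X22 z * Y12 z))
          = ∫ z in (-h0)..h0, (((om:ℂ)^2 * X11 z + deriv X12 z) * X21 z
            + (-(deriv X11 z) + X12 z/(mu:ℂ)) * X22 z) := by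
        apply intervalIntegral.integral_congr
        intro z hz
        obtain ⟨h1, h2⟩ := hG1 z (huIcc ▸ hz)
        linear_combination (-(X21 z)) * h1 + (-(X22 z)) * h2
      _ = ∫ z in (-h0)..h0, (((om:ℂ)^2 * X21 z + deriv X22 z) * X11 z
            + (-(deriv X21 z) + X22 z/(mu:ℂ)) * X12 z) :=
        keyG h0 (om:ℂ) (mu:ℂ) X11 X12 X21 X22 hX11 hX12 hX21 hX22
          hB11.1 hB11.2 hB21.1 hB21.2
      _ = ∫ z in (-h0)..h0, Complex.I * k₂ * (X11 z * Y21 z + X12 z * Y22 z) := by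
        apply intervalIntegral.integral_congr
        intro z hz
        obtain ⟨h1, h2⟩ := hG2 z (huIcc ▸ hz)
        linear_combination (X11 z) * h1 + (X12 z) * h2
  have f1 : k₁ * A = k₂ * B := by
    apply mul_left_cancel₀ Complex.I_ne_zero
    linear_combination e1
  have f2 : k₁ * B = k₂ * A := by
    apply mul_left_cancel₀ Complex.I_ne_zero
    linear_combination e2
  have key : (k₁^2 - k₂^2) * A = 0 := by
    linear_combination k₁ * f1 + k₂ * f2
  have := mul_eq_zero.mp key
  rcases this with h | h
  · exact absurd (sub_eq_zero.mp h) hk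
  · exact h
end

section
/- Let λ, μ, ω, h ∈ ℝ with μ > 0, λ + 2μ > 0, h > 0. (i) For all C² functions Y = (Y₁, Y₂), Ỹ = (Ỹ₁, Ỹ₂) : [−h,h] → ℂ² satisfying B₂(Y)(±h) = B₂(Ỹ)(±h) = 0, one has ⟨F(Y), Ỹ⟩ = ⟨Y, F(Ỹ)⟩. (ii) For all C¹ functions X = (X₁, X₂), X̃ = (X̃₁, X̃₂) : [−h,h] → ℂ² satisfying B₁(X)(±h) = B₁(X̃)(±h) = 0, one has ⟨G(X), X̃⟩ = ⟨X, G(X̃)⟩. In other words, the operators F and G are self-adjoint with respect to the bilinear pairing ⟨·,·⟩ on functions satisfying the respective boundary conditions. -/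
open Complex Set intervalIntegral

private lemma integral_eq_of_antiderivative {a b : ℝ} {L R P : ℝ → ℂ}
    (hL : Continuous L) (hR : Continuous R)
    (hP : ∀ z, HasDerivAt P (L z - R z) z) (hPab : P b = P a) :
    ∫ z in a..b, L z = ∫ z in a..b, R z := by
  have hint : IntervalIntegrable (fun z => L z - R z) MeasureTheory.volume a b :=
    (hL.sub hR).intervalIntegrable a b
  have h1 : ∫ z in a..b, (L z - R z) = P b - P a :=
    intervalIntegral.integral_eq_sub_of_hasDerivAt (fun z _ => hP z) hint
  have h2 : ∫ z in a..b, (L z - R z) = (∫ z in a..b, L z) - ∫ z in a..b, R z :=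
    intervalIntegral.integral_sub (hL.intervalIntegrable a b) (hR.intervalIntegrable a b)
  rw [h2, hPab, sub_self] at h1
  exact sub_eq_zero.mp h1

/-- **Self-adjointness of `F` and `G` for the bilinear pairing.**
(i) For C² pairs `Y = (Y₁,Y₂)`, `Ỹ = (Ỹ₁,Ỹ₂)` with `B₂(Y)(±h0) = B₂(Ỹ)(±h0) = 0`,
one has `⟨F(Y), Ỹ⟩ = ⟨Y, F(Ỹ)⟩`.
(ii) For C¹ pairs `X = (X₁,X₂)`, `X̃ = (X̃₁,X̃₂)` with `B₁(X)(±h0) = B₁(X̃)(±h0) = 0`,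
one has `⟨G(X), X̃⟩ = ⟨X, G(X̃)⟩`. -/
theorem F_G_selfadjoint
    (lam mu om h0 : ℝ) (hmu : 0 < mu) (hlm : 0 < lam + 2*mu) (hh : 0 < h0) :
    (∀ Y1 Y2 Z1 Z2 : ℝ → ℂ,
      ContDiff ℝ 2 Y1 → ContDiff ℝ 2 Y2 → ContDiff ℝ 2 Z1 → ContDiff ℝ 2 Z2 →
      (-((lam:ℂ)/((lam:ℂ)+2*(mu:ℂ))) * Y1 h0
          + ((4*(mu:ℂ)*((lam:ℂ)+(mu:ℂ)))/((lam:ℂ)+2*(mu:ℂ))) * deriv Y2 h0 = 0) →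
      (-((lam:ℂ)/((lam:ℂ)+2*(mu:ℂ))) * Y1 (-h0)
          + ((4*(mu:ℂ)*((lam:ℂ)+(mu:ℂ)))/((lam:ℂ)+2*(mu:ℂ))) * deriv Y2 (-h0) = 0) →
      (-((lam:ℂ)/((lam:ℂ)+2*(mu:ℂ))) * Z1 h0
          + ((4*(mu:ℂ)*((lam:ℂ)+(mu:ℂ)))/((lam:ℂ)+2*(mu:ℂ))) * deriv Z2 h0 = 0) →
      (-((lam:ℂ)/((lam:ℂ)+2*(mu:ℂ))) * Z1 (-h0)
          + ((4*(mu:ℂ)*((lam:ℂ)+(mu:ℂ)))/((lam:ℂ)+2*(mu:ℂ))) * deriv Z2 (-h0) = 0) →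
      (∫ z in (-h0)..h0,
          ((-(Y1 z)/((lam:ℂ)+2*(mu:ℂ)) - ((lam:ℂ)/((lam:ℂ)+2*(mu:ℂ))) * deriv Y2 z) * Z1 z
          + (((lam:ℂ)/((lam:ℂ)+2*(mu:ℂ))) * deriv Y1 z - (om:ℂ)^2 * Y2 z
              - ((4*(mu:ℂ)*((lam:ℂ)+(mu:ℂ)))/((lam:ℂ)+2*(mu:ℂ))) * deriv (deriv Y2) z)
            * Z2 z))
        = ∫ z in (-h0)..h0,
            (Y1 z * (-(Z1 z)/((lam:ℂ)+2*(mu:ℂ))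
                - ((lam:ℂ)/((lam:ℂ)+2*(mu:ℂ))) * deriv Z2 z)
            + Y2 z * (((lam:ℂ)/((lam:ℂ)+2*(mu:ℂ))) * deriv Z1 z - (om:ℂ)^2 * Z2 z
                - ((4*(mu:ℂ)*((lam:ℂ)+(mu:ℂ)))/((lam:ℂ)+2*(mu:ℂ))) * deriv (deriv Z2) z)))
    ∧ (∀ X1 X2 W1 W2 : ℝ → ℂ,
      ContDiff ℝ 1 X1 → ContDiff ℝ 1 X2 → ContDiff ℝ 1 W1 → ContDiff ℝ 1 W2 →
      X2 h0 = 0 → X2 (-h0) = 0 → W2 h0 = 0 → W2 (-h0) = 0 →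
      (∫ z in (-h0)..h0,
          (((om:ℂ)^2 * X1 z + deriv X2 z) * W1 z
            + (-(deriv X1 z) + X2 z/(mu:ℂ)) * W2 z))
        = ∫ z in (-h0)..h0,
            (X1 z * ((om:ℂ)^2 * W1 z + deriv W2 z)
              + X2 z * (-(deriv W1 z) + W2 z/(mu:ℂ)))) := by
  constructor
  · intro Y1 Y2 Z1 Z2 hY1 hY2 hZ1 hZ2 bY1 bY2 bZ1 bZ2
    set c : ℂ := (lam:ℂ)/((lam:ℂ)+2*(mu:ℂ)) with hc
    set d : ℂ := (4*(mu:ℂ)*((lam:ℂ)+(mu:ℂ)))/((lam:ℂ)+2*(mu:ℂ)) with hd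
    have dY1 : ∀ z, HasDerivAt Y1 (deriv Y1 z) z :=
      fun z => (hY1.differentiable two_ne_zero z).hasDerivAt
    have dY2 : ∀ z, HasDerivAt Y2 (deriv Y2 z) z :=
      fun z => (hY2.differentiable two_ne_zero z).hasDerivAt
    have dZ1 : ∀ z, HasDerivAt Z1 (deriv Z1 z) z :=
      fun z => (hZ1.differentiable two_ne_zero z).hasDerivAt
    have dZ2 : ∀ z, HasDerivAt Z2 (deriv Z2 z) z :=
      fun z => (hZ2.differentiable two_ne_zero z).hasDerivAt
    have dY2' : ∀ z, HasDerivAt (deriv Y2) (deriv (deriv Y2) z) z :=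
      fun z => ((cd_deriv hY2).differentiable one_ne_zero z).hasDerivAt
    have dZ2' : ∀ z, HasDerivAt (deriv Z2) (deriv (deriv Z2) z) z :=
      fun z => ((cd_deriv hZ2).differentiable one_ne_zero z).hasDerivAt
    have cY1 := hY1.continuous; have cY2 := hY2.continuous
    have cZ1 := hZ1.continuous; have cZ2 := hZ2.continuous
    have cY1' := (cd_deriv hY1).continuous; have cY2' := (cd_deriv hY2).continuous
    have cZ1' := (cd_deriv hZ1).continuous; have cZ2' := (cd_deriv hZ2).continuous
    have cY2'' := (cd_deriv hY2).continuous_deriv le_rfl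
    have cZ2'' := (cd_deriv hZ2).continuous_deriv le_rfl
    refine integral_eq_of_antiderivative
      (P := fun z => c*(Y1 z*Z2 z) - c*(Y2 z*Z1 z) - d*(deriv Y2 z*Z2 z)
        + d*(Y2 z*deriv Z2 z)) ?_ ?_ ?_ ?_
    · fun_prop
    · fun_prop
    · intro z
      have h := ((((HasDerivAt.const_mul c ((dY1 z).mul (dZ2 z))).sub
          (HasDerivAt.const_mul c ((dY2 z).mul (dZ1 z)))).sub
          (HasDerivAt.const_mul d ((dY2' z).mul (dZ2 z)))).add
          (HasDerivAt.const_mul d ((dY2 z).mul (dZ2' z))))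
      convert h using 1
      case e'_8 => rfl
      case e'_9 => ring
      case e'_4 => rfl
    · have e1 : c*(Y1 h0*Z2 h0) - c*(Y2 h0*Z1 h0) - d*(deriv Y2 h0*Z2 h0)
          + d*(Y2 h0*deriv Z2 h0) = 0 := by
        linear_combination (-(Z2 h0)) * bY1 + (Y2 h0) * bZ1
      have e2 : c*(Y1 (-h0)*Z2 (-h0)) - c*(Y2 (-h0)*Z1 (-h0))
          - d*(deriv Y2 (-h0)*Z2 (-h0)) + d*(Y2 (-h0)*deriv Z2 (-h0)) = 0 := by
        linear_combination (-(Z2 (-h0))) * bY2 + (Y2 (-h0)) * bZ2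
      simp only [e1, e2]
  · intro X1 X2 W1 W2 hX1 hX2 hW1 hW2 bX1 bX2 bW1 bW2
    have dX1 : ∀ z, HasDerivAt X1 (deriv X1 z) z :=
      fun z => (hX1.differentiable one_ne_zero z).hasDerivAt
    have dX2 : ∀ z, HasDerivAt X2 (deriv X2 z) z :=
      fun z => (hX2.differentiable one_ne_zero z).hasDerivAt
    have dW1 : ∀ z, HasDerivAt W1 (deriv W1 z) z :=
      fun z => (hW1.differentiable one_ne_zero z).hasDerivAt
    have dW2 : ∀ z, HasDerivAt W2 (deriv W2 z) z :=
      fun z => (hW2.differentiable one_ne_zero z).hasDerivAt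
    have cX1 := hX1.continuous; have cX2 := hX2.continuous
    have cW1 := hW1.continuous; have cW2 := hW2.continuous
    have cX1' := hX1.continuous_deriv le_rfl; have cX2' := hX2.continuous_deriv le_rfl
    have cW1' := hW1.continuous_deriv le_rfl; have cW2' := hW2.continuous_deriv le_rfl
    refine integral_eq_of_antiderivative
      (P := fun z => X2 z * W1 z - X1 z * W2 z) ?_ ?_ ?_ ?_
    · fun_prop
    · fun_prop
    · intro z
      have h := ((dX2 z).mul (dW1 z)).sub ((dX1 z).mul (dW2 z))
      convert h using 1
      case e'_8 => rfl
      case e'_9 => ring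
      case e'_4 => rfl
    · simp [bX1, bX2, bW1, bW2]
end

section
/- Let λ, μ, ω, h ∈ ℝ with μ > 0, λ + 2μ > 0, h > 0, and let k ∈ ℂ. Suppose (X, Y) is a pair of C² functions [−h,h] → ℂ², not both identically zero, satisfying F(Y) = ikX and G(X) = ikY on [−h,h] together with the boundary conditions B₁(X)(±h) = 0 and B₂(Y)(±h) = 0. Then for any p, q ∈ ℂ with p² = ω²/(λ+2μ) − k² and q² = ω²/μ − k², the wavenumber k satisfies the Rayleigh–Lamb equation: ( (q²−k²)² sin(qh) cos(ph) + 4k²pq sin(ph) cos(qh) ) · ( (q²−k²)² cos(qh) sin(ph) + 4k²pq cos(ph) sin(qh) ) = 0, i.e. k satisfies either the symmetric or the antisymmetric Rayleigh–Lamb equation. -/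
open Complex Set

noncomputable def Spc (p : ℂ) (z : ℝ) : ℂ := if p = 0 then (z:ℂ) else Complex.sin (p*z)/p

lemma Spc_zero (p : ℂ) : Spc p 0 = 0 := by unfold Spc; split <;> simp

lemma Spc_neg (p : ℂ) (z : ℝ) : Spc p (-z) = -Spc p z := by
  unfold Spc; split <;> push_cast <;> simp [mul_neg, Complex.sin_neg, neg_div]

lemma p_mul_Spc (p : ℂ) (z : ℝ) : p * Spc p z = Complex.sin (p*z) := by
  unfold Spc; split
  · simp [*]
  · field_simp

lemma hasDerivAt_sin_lin (p : ℂ) (z : ℝ) :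
    HasDerivAt (fun t : ℝ => Complex.sin (p*t)) (p * Complex.cos (p*z)) z := by
  have h1 : HasDerivAt (fun w : ℂ => Complex.sin (p*w)) (Complex.cos (p*z) * p) (z:ℂ) := by
    simpa [Function.comp_def] using (Complex.hasDerivAt_sin (p*(z:ℂ))).comp (z:ℂ)
      ((hasDerivAt_id (z:ℂ)).const_mul p)
  simpa [mul_comm] using h1.comp_ofReal

lemma hasDerivAt_cos_lin (p : ℂ) (z : ℝ) :
    HasDerivAt (fun t : ℝ => Complex.cos (p*t)) (-p * Complex.sin (p*z)) z := by
  have h1 : HasDerivAt (fun w : ℂ => Complex.cos (p*w)) (-Complex.sin (p*z) * p) (z:ℂ) := by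
    simpa [Function.comp_def] using (Complex.hasDerivAt_cos (p*(z:ℂ))).comp (z:ℂ)
      ((hasDerivAt_id (z:ℂ)).const_mul p)
  simpa [mul_comm] using h1.comp_ofReal

lemma hasDerivAt_Spc (p : ℂ) (z : ℝ) :
    HasDerivAt (Spc p) (Complex.cos (p*z)) z := by
  unfold Spc
  split
  · next h => simpa [h] using (hasDerivAt_id z).ofReal_comp
  · next h =>
    simpa [div_mul_eq_mul_div, mul_comm, mul_div_assoc, mul_div_cancel_left₀ _ h]
      using (hasDerivAt_sin_lin p z).div_const p

lemma lin22 {a b c d x y : ℂ} (h1 : a*x + b*y = 0) (h2 : c*x + d*y = 0)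
    (hdet : a*d - b*c ≠ 0) : x = 0 ∧ y = 0 := by
  constructor
  · have h : (a*d - b*c) * x = d * (a*x+b*y) - b * (c*x+d*y) := by ring
    rw [h1, h2] at h
    simpa [hdet] using (by simpa using h : (a*d-b*c) * x = 0)
  · have h : (a*d - b*c) * y = a * (c*x+d*y) - c * (a*x+b*y) := by ring
    rw [h1, h2] at h
    simpa [hdet] using (by simpa using h : (a*d-b*c) * y = 0)

lemma derivEqOn {f g : ℝ → ℂ} {h0 : ℝ} (hh : 0 < h0)
    (hf : Differentiable ℝ f) (hg : Differentiable ℝ g)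
    (heq : ∀ z ∈ Icc (-h0) h0, f z = g z) :
    ∀ z ∈ Icc (-h0) h0, deriv f z = deriv g z := by
  intro z hz
  have hu : UniqueDiffWithinAt ℝ (Icc (-h0) h0) z :=
    uniqueDiffOn_Icc (by linarith) z hz
  rw [← (hf z).derivWithin hu, ← (hg z).derivWithin hu]
  exact derivWithin_congr heq (heq z hz)

lemma deriv_cmul {f : ℝ → ℂ} (hf : Differentiable ℝ f) (a : ℂ) (z : ℝ) :
    deriv (fun t => a * f t) z = a * deriv f z :=
  (((hf z).hasDerivAt).const_mul a).deriv

lemma deriv_lincomb {f g : ℝ → ℂ} (hf : Differentiable ℝ f) (hg : Differentiable ℝ g)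
    (a b : ℂ) (z : ℝ) :
    deriv (fun t => a * f t + b * g t) z = a * deriv f z + b * deriv g z :=
  ((((hf z).hasDerivAt).const_mul a).add (((hg z).hasDerivAt).const_mul b)).deriv

/-- Representation of solutions of `f'' = -p² f` on an interval. -/
lemma ode_rep {p : ℂ} {h0 : ℝ} (hh : 0 < h0) {f g : ℝ → ℂ}
    (hf : Differentiable ℝ f) (hg : Differentiable ℝ g)
    (hfg : ∀ z ∈ Icc (-h0) h0, deriv f z = g z)
    (hode : ∀ z ∈ Icc (-h0) h0, deriv g z = -p^2 * f z) :
    ∀ z ∈ Icc (-h0) h0,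
      f z = f 0 * Complex.cos (p*z) + g 0 * Spc p z ∧
      g z = g 0 * Complex.cos (p*z) - p * Complex.sin (p*z) * f 0 := by
  set s := Icc (-h0:ℝ) h0 with hs
  have h0mem : (0:ℝ) ∈ s := Set.mem_Icc.mpr ⟨by linarith, le_of_lt hh⟩
  set u : ℝ → ℂ := fun z => g z * Complex.cos (p*z) + p * (f z * Complex.sin (p*z)) with hu
  set v : ℝ → ℂ := fun z => g z * Spc p z - f z * Complex.cos (p*z) with hv
  have hud : ∀ z ∈ s, HasDerivWithinAt u 0 s z := by
    intro z hz
    have h1 : HasDerivAt u (deriv g z * Complex.cos (p*z) + g z * (-p * Complex.sin (p*z))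
        + p * (deriv f z * Complex.sin (p*z) + f z * (p * Complex.cos (p*z)))) z := by
      exact (((hg z).hasDerivAt.mul (hasDerivAt_cos_lin p z)).add
        (((hf z).hasDerivAt.mul (hasDerivAt_sin_lin p z)).const_mul p))
    rw [hfg z hz, hode z hz] at h1
    have h2 : (-p^2 * f z * Complex.cos (p*z) + g z * (-p * Complex.sin (p*z))
        + p * (g z * Complex.sin (p*z) + f z * (p * Complex.cos (p*z)))) = 0 := by ring
    rw [h2] at h1
    exact h1.hasDerivWithinAt
  have hvd : ∀ z ∈ s, HasDerivWithinAt v 0 s z := by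
    intro z hz
    have h1 : HasDerivAt v (deriv g z * Spc p z + g z * Complex.cos (p*z)
        - (deriv f z * Complex.cos (p*z) + f z * (-p * Complex.sin (p*z)))) z := by
      exact ((hg z).hasDerivAt.mul (hasDerivAt_Spc p z)).sub
        ((hf z).hasDerivAt.mul (hasDerivAt_cos_lin p z))
    rw [hfg z hz, hode z hz] at h1
    have h2 : (-p^2 * f z * Spc p z + g z * Complex.cos (p*z)
        - (g z * Complex.cos (p*z) + f z * (-p * Complex.sin (p*z)))) = 0 := by
      have := p_mul_Spc p z
      linear_combination (-p * f z) * this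
    rw [h2] at h1
    exact h1.hasDerivWithinAt
  have hconst : ∀ (w : ℝ → ℂ), (∀ z ∈ s, HasDerivWithinAt w 0 s z) →
      ∀ z ∈ s, w z = w 0 := by
    intro w hw z hz
    have h1 := Convex.norm_image_sub_le_of_norm_hasDerivWithin_le
      (f' := fun _ => (0:ℂ)) hw (fun x _ => le_of_eq norm_zero) (convex_Icc _ _) h0mem hz
    have h2 : ‖w z - w 0‖ ≤ 0 := by simpa using h1
    exact sub_eq_zero.mp (norm_le_zero_iff.mp h2)
  intro z hz
  have hu0 : u z = g 0 := by
    have := hconst u hud z hz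
    simpa [hu, Spc_zero] using this
  have hv0 : v z = -f 0 := by
    have := hconst v hvd z hz
    simpa [hv, Spc_zero] using this
  have e1 : g z * Complex.cos (p*z) + p * (f z * Complex.sin (p*z)) = g 0 := hu0
  have e2 : g z * Spc p z - f z * Complex.cos (p*z) = -f 0 := hv0
  have pyth := Complex.sin_sq_add_cos_sq (p*z)
  have hps := p_mul_Spc p z
  constructor
  · linear_combination (Spc p z) * e1 - (Complex.cos (p*z)) * e2 - f z * pyth
      - f z * Complex.sin (p*z) * hps
  · linear_combination (Complex.cos (p*z)) * e1 + (p * Complex.sin (p*z)) * e2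
      - g z * pyth - g z * Complex.sin (p*z) * hps

/-- **Lamb modes satisfy the Rayleigh–Lamb equation.** If `(X, Y)` is a nontrivial pair
of C² functions satisfying `F(Y) = ikX`, `G(X) = ikY` on `[-h0, h0]` with boundary
conditions `B₁(X)(±h0) = B₂(Y)(±h0) = 0`, then for any square roots `p, q` of
`ω²/(λ+2μ) − k²` and `ω²/μ − k²`, the wavenumber `k` satisfies the product of the
symmetric and antisymmetric Rayleigh–Lamb equations. -/
theorem lamb_mode_wavenumber_satisfies_rayleigh_lamb
    (lam mu om h0 : ℝ) (hmu : 0 < mu) (hlm : 0 < lam + 2*mu) (hh : 0 < h0)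
    (k : ℂ) (X1 X2 Y1 Y2 : ℝ → ℂ)
    (hX1 : ContDiff ℝ 2 X1) (hX2 : ContDiff ℝ 2 X2)
    (hY1 : ContDiff ℝ 2 Y1) (hY2 : ContDiff ℝ 2 Y2)
    (hnontriv : ¬ (∀ z ∈ Set.Icc (-h0) h0,
        X1 z = 0 ∧ X2 z = 0 ∧ Y1 z = 0 ∧ Y2 z = 0))
    (hF : ∀ z ∈ Set.Icc (-h0) h0,
        -(Y1 z)/((lam:ℂ)+2*(mu:ℂ)) - ((lam:ℂ)/((lam:ℂ)+2*(mu:ℂ))) * deriv Y2 z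
          = Complex.I*k*X1 z
        ∧ ((lam:ℂ)/((lam:ℂ)+2*(mu:ℂ))) * deriv Y1 z - (om:ℂ)^2 * Y2 z
            - ((4*(mu:ℂ)*((lam:ℂ)+(mu:ℂ)))/((lam:ℂ)+2*(mu:ℂ))) * deriv (deriv Y2) z
          = Complex.I*k*X2 z)
    (hG : ∀ z ∈ Set.Icc (-h0) h0,
        (om:ℂ)^2 * X1 z + deriv X2 z = Complex.I*k*Y1 z
        ∧ -(deriv X1 z) + X2 z/(mu:ℂ) = Complex.I*k*Y2 z)
    (hB1 : X2 h0 = 0 ∧ X2 (-h0) = 0)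
    (hB2 : -((lam:ℂ)/((lam:ℂ)+2*(mu:ℂ))) * Y1 h0
            + ((4*(mu:ℂ)*((lam:ℂ)+(mu:ℂ)))/((lam:ℂ)+2*(mu:ℂ))) * deriv Y2 h0 = 0
          ∧ -((lam:ℂ)/((lam:ℂ)+2*(mu:ℂ))) * Y1 (-h0)
            + ((4*(mu:ℂ)*((lam:ℂ)+(mu:ℂ)))/((lam:ℂ)+2*(mu:ℂ))) * deriv Y2 (-h0) = 0) :
    ∀ p q : ℂ, p^2 = (om:ℂ)^2/((lam:ℂ)+2*(mu:ℂ)) - k^2 → q^2 = (om:ℂ)^2/(mu:ℂ) - k^2 →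
      ((q^2-k^2)^2 * Complex.sin (q*h0) * Complex.cos (p*h0)
          + 4*k^2*p*q*Complex.sin (p*h0) * Complex.cos (q*h0))
        * ((q^2-k^2)^2 * Complex.cos (q*h0) * Complex.sin (p*h0)
          + 4*k^2*p*q*Complex.cos (p*h0) * Complex.sin (q*h0)) = 0 := by
  intro p q hp hq
  have hA : ((lam:ℂ)+2*(mu:ℂ)) ≠ 0 := by
    have h := Complex.ofReal_ne_zero.mpr (ne_of_gt hlm)
    push_cast at h; exact h
  have hmu0 : ((mu:ℝ):ℂ) ≠ 0 := Complex.ofReal_ne_zero.mpr (ne_of_gt hmu)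
  have hI2 : (Complex.I:ℂ)^2 = -1 := Complex.I_sq
  have hp' : ((lam:ℂ)+2*mu)*p^2 + ((lam:ℂ)+2*mu)*k^2 = (om:ℂ)^2 := by
    have h := hp; field_simp at h; linear_combination h
  have hq' : (mu:ℂ)*q^2 + (mu:ℂ)*k^2 = (om:ℂ)^2 := by
    have h := hq; field_simp at h; linear_combination h
  -- Case ω = 0 : the Rayleigh–Lamb expression vanishes identically.
  rcases eq_or_ne ((om:ℝ):ℂ) 0 with hom|hom
  · have hp2 : p^2 + k^2 = 0 := by
      have h : ((lam:ℂ)+2*mu)*(p^2+k^2) = ((lam:ℂ)+2*mu)*0 := by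
        rw [hom] at hp'; linear_combination hp'
      exact mul_left_cancel₀ hA h
    have hq2 : q^2 + k^2 = 0 := by
      have h : (mu:ℂ)*(q^2+k^2) = (mu:ℂ)*0 := by
        rw [hom] at hq'; linear_combination hq'
      exact mul_left_cancel₀ hmu0 h
    have hpq : (p-q)*(p+q) = 0 := by linear_combination hp2 - hq2
    apply mul_eq_zero_of_left
    rcases mul_eq_zero.mp hpq with h|h
    · rw [sub_eq_zero.mp h]
      linear_combination ((q^2+k^2)*Complex.sin (q*(h0:ℂ))*Complex.cos (q*(h0:ℂ))) * hq2
    · rw [eq_neg_of_add_eq_zero_left h, neg_mul q (h0:ℂ), Complex.sin_neg, Complex.cos_neg]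
      linear_combination ((q^2+k^2)*Complex.sin (q*(h0:ℂ))*Complex.cos (q*(h0:ℂ))) * hq2
  -- differentiability facts
  have dX1 : Differentiable ℝ X1 := hX1.differentiable (by norm_num)
  have dX2 : Differentiable ℝ X2 := hX2.differentiable (by norm_num)
  have dY1 : Differentiable ℝ Y1 := hY1.differentiable (by norm_num)
  have dY2 : Differentiable ℝ Y2 := hY2.differentiable (by norm_num)
  have h2eq : (2 : WithTop ℕ∞) = 1 + 1 := by norm_num
  have dY2' : Differentiable ℝ (deriv Y2) := by
    rw [h2eq] at hY2
    exact (contDiff_succ_iff_deriv.mp hY2).2.2.differentiable one_ne_zero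
  have dX2' : Differentiable ℝ (deriv X2) := by
    rw [h2eq] at hX2
    exact (contDiff_succ_iff_deriv.mp hX2).2.2.differentiable one_ne_zero
  have hmemp : h0 ∈ Icc (-h0) h0 := ⟨by linarith, le_refl h0⟩
  have hmemm : -h0 ∈ Icc (-h0) h0 := ⟨le_refl _, by linarith⟩
  -- pointwise consequences of the system
  have E1 : ∀ z ∈ Icc (-h0) h0,
      Y1 z = (-(((lam:ℂ)+2*mu)*Complex.I*k))*X1 z + (-(lam:ℂ))*deriv Y2 z := by
    intro z hz
    have h := (hF z hz).1
    field_simp at h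
    have h2 : ((lam:ℂ)+2*mu)*(Y1 z)
        = ((lam:ℂ)+2*mu)*((-(((lam:ℂ)+2*mu)*Complex.I*k))*X1 z + (-(lam:ℂ))*deriv Y2 z) := by
      linear_combination (-((lam:ℂ)+2*mu)) * h
    exact mul_left_cancel₀ hA h2
  have E4 : ∀ z ∈ Icc (-h0) h0, (mu:ℂ) * deriv X1 z = X2 z - Complex.I*k*(mu:ℂ)*Y2 z := by
    intro z hz
    have h := (hG z hz).2
    field_simp at h
    linear_combination -h
  have E3 : ∀ z ∈ Icc (-h0) h0,
      deriv X2 z = (((lam:ℂ)+2*mu)*k^2-(om:ℂ)^2)*X1 z - Complex.I*k*(lam:ℂ)*deriv Y2 z := by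
    intro z hz
    have h := (hG z hz).1
    linear_combination h + (Complex.I*k)*(E1 z hz) - (((lam:ℂ)+2*mu)*k^2*X1 z)*hI2
  have DY1 : ∀ z ∈ Icc (-h0) h0,
      deriv Y1 z = (-(((lam:ℂ)+2*mu)*Complex.I*k))*deriv X1 z
        + (-(lam:ℂ))*deriv (deriv Y2) z := by
    have h := derivEqOn hh dY1
      ((dX1.const_mul _).add (dY2'.const_mul _)) E1
    intro z hz
    rw [h z hz]
    exact deriv_lincomb dX1 dY2' _ _ z
  have ES : ∀ z ∈ Icc (-h0) h0, ((lam:ℂ)+2*mu)*(mu:ℂ)*deriv (deriv Y2) z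
      = -(Complex.I*k*((lam:ℂ)+(mu:ℂ)))*X2 z - (mu:ℂ)*((lam:ℂ)*k^2+(om:ℂ)^2)*Y2 z := by
    intro z hz
    have h := (hF z hz).2
    rw [DY1 z hz] at h
    field_simp at h
    have h2 : ((lam:ℂ)+2*mu)*(((lam:ℂ)+2*mu)*(mu:ℂ)*deriv (deriv Y2) z)
        = ((lam:ℂ)+2*mu)*(-(Complex.I*k*((lam:ℂ)+(mu:ℂ)))*X2 z
            - (mu:ℂ)*((lam:ℂ)*k^2+(om:ℂ)^2)*Y2 z) := by
      linear_combination (-(mu:ℂ))*h - (((lam:ℂ)+2*mu)*Complex.I*k*(lam:ℂ))*(E4 z hz)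
        + (((lam:ℂ)+2*mu)*(lam:ℂ)*(mu:ℂ)*k^2*Y2 z)*hI2
    exact mul_left_cancel₀ hA h2
  -- cleaned boundary conditions
  have hb2 : ∀ z ∈ Icc (-h0) h0,
      (-((lam:ℂ)/((lam:ℂ)+2*(mu:ℂ))) * Y1 z
        + ((4*(mu:ℂ)*((lam:ℂ)+(mu:ℂ)))/((lam:ℂ)+2*(mu:ℂ))) * deriv Y2 z = 0) →
      (lam:ℂ)*(Complex.I*k)*X1 z + ((lam:ℂ)+2*mu)*deriv Y2 z = 0 := by
    intro z hz h
    rw [E1 z hz] at h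
    field_simp at h
    have h2 : ((lam:ℂ)+2*mu)*(((lam:ℂ)+2*mu)*((lam:ℂ)*(Complex.I*k)*X1 z
          + ((lam:ℂ)+2*mu)*deriv Y2 z))
        = ((lam:ℂ)+2*mu)*(((lam:ℂ)+2*mu)*0) := by linear_combination ((lam:ℂ)+2*mu) * h
    exact mul_left_cancel₀ hA (mul_left_cancel₀ hA h2)
  have hb2p := hb2 h0 hmemp hB2.1
  have hb2m := hb2 (-h0) hmemm hB2.2
  -- rewriting cos/sin/Spc at -h0
  have hconeg : ∀ r : ℂ, Complex.cos (r * ((-h0:ℝ):ℂ)) = Complex.cos (r * ((h0:ℝ):ℂ)) := by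
    intro r
    have he : ((-h0:ℝ):ℂ) = -((h0:ℝ):ℂ) := by push_cast; ring
    rw [he, mul_neg, Complex.cos_neg]
  have hsineg : ∀ r : ℂ, Complex.sin (r * ((-h0:ℝ):ℂ)) = -Complex.sin (r * ((h0:ℝ):ℂ)) := by
    intro r
    have he : ((-h0:ℝ):ℂ) = -((h0:ℝ):ℂ) := by push_cast; ring
    rw [he, mul_neg, Complex.sin_neg]
  -- the Rayleigh-Lamb factors
  by_contra hRL
  have hf1 : (q^2-k^2)^2 * Complex.sin (q*h0) * Complex.cos (p*h0)
      + 4*k^2*p*q*Complex.sin (p*h0) * Complex.cos (q*h0) ≠ 0 :=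
    fun h => hRL (by rw [h, zero_mul])
  have hf2 : (q^2-k^2)^2 * Complex.cos (q*h0) * Complex.sin (p*h0)
      + 4*k^2*p*q*Complex.cos (p*h0) * Complex.sin (q*h0) ≠ 0 :=
    fun h => hRL (by rw [h, mul_zero])
  rcases eq_or_ne k 0 with hk|hk
  · -- k = 0 case
    subst hk
    have hq0 : q ≠ 0 := by
      intro h
      apply hf1
      rw [h]
      simp
    have hp0 : p ≠ 0 := by
      intro h
      apply hf2
      rw [h]
      simp
    have hom2 : ((om:ℝ):ℂ)^2 ≠ 0 := pow_ne_zero 2 hom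
    have h1 : q^4*(Complex.sin (q*(h0:ℝ)) * Complex.cos (p*(h0:ℝ))) ≠ 0 := by
      intro h; apply hf1; linear_combination h
    have h2 : q^4*(Complex.cos (q*(h0:ℝ)) * Complex.sin (p*(h0:ℝ))) ≠ 0 := by
      intro h; apply hf2; linear_combination h
    have hSinq : Complex.sin (q*(h0:ℝ)) ≠ 0 := fun h => h1 (by rw [h]; ring)
    have hCp : Complex.cos (p*(h0:ℝ)) ≠ 0 := fun h => h1 (by rw [h]; ring)
    have hCq : Complex.cos (q*(h0:ℝ)) ≠ 0 := fun h => h2 (by rw [h]; ring)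
    have hSinp : Complex.sin (p*(h0:ℝ)) ≠ 0 := fun h => h2 (by rw [h]; ring)
    have hSq : Spc q h0 ≠ 0 := fun h => hSinq (by rw [← p_mul_Spc, h, mul_zero])
    -- X2 satisfies X2'' = -q² X2 with X2(±h0)=0
    have hEq : ∀ z ∈ Icc (-h0) h0, deriv X2 z = (-(om:ℂ)^2) * X1 z := by
      intro z hz; linear_combination E3 z hz
    have HdX2 : ∀ z ∈ Icc (-h0) h0, deriv (deriv X2) z = -q^2 * X2 z := by
      intro z hz
      rw [derivEqOn hh dX2' (dX1.const_mul _) hEq z hz, deriv_cmul dX1 _ z]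
      have h3 : (mu:ℂ) * (-(om:ℂ)^2 * deriv X1 z) = (mu:ℂ) * (-q^2 * X2 z) := by
        linear_combination (-(om:ℂ)^2)*(E4 z hz) + (X2 z)*hq'
      exact mul_left_cancel₀ hmu0 h3
    have repX2 := ode_rep (p := q) hh dX2 dX2' (fun z _ => rfl) HdX2
    have rXp := (repX2 h0 hmemp).1
    have rXm := (repX2 (-h0) hmemm).1
    rw [hconeg, Spc_neg, hB1.2] at rXm
    rw [hB1.1] at rXp
    have hX20 : X2 0 = 0 := by
      have h3 : X2 0 * Complex.cos (q*(h0:ℝ)) = 0 := by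
        linear_combination (-(1:ℂ)/2)*rXp - (1/2)*rXm
      exact (mul_eq_zero.mp h3).resolve_right hCq
    have hX21 : deriv X2 0 = 0 := by
      have h3 : deriv X2 0 * Spc q h0 = 0 := by
        linear_combination (-(1:ℂ)/2)*rXp + (1/2)*rXm
      exact (mul_eq_zero.mp h3).resolve_right hSq
    have hX2z : ∀ z ∈ Icc (-h0) h0, X2 z = 0 := by
      intro z hz
      have h3 := (repX2 z hz).1
      rw [hX20, hX21] at h3
      simpa using h3
    have hdX2z : ∀ z ∈ Icc (-h0) h0, deriv X2 z = 0 := by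
      intro z hz
      have h3 := (repX2 z hz).2
      rw [hX20, hX21] at h3
      simpa using h3
    have hX1z : ∀ z ∈ Icc (-h0) h0, X1 z = 0 := by
      intro z hz
      have h3 : (-(om:ℂ)^2) * X1 z = 0 := by rw [← hEq z hz]; exact hdX2z z hz
      exact (mul_eq_zero.mp h3).resolve_left (neg_ne_zero.mpr hom2)
    -- Y2 satisfies Y2'' = -p² Y2 with Y2'(±h0)=0
    have HdY2 : ∀ z ∈ Icc (-h0) h0, deriv (deriv Y2) z = -p^2 * Y2 z := by
      intro z hz
      have h3 : ((lam:ℂ)+2*mu)*((mu:ℂ)*(deriv (deriv Y2) z))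
          = ((lam:ℂ)+2*mu)*((mu:ℂ)*(-p^2*Y2 z)) := by
        linear_combination ES z hz + ((mu:ℂ)*Y2 z)*hp'
      exact mul_left_cancel₀ hmu0 (mul_left_cancel₀ hA h3)
    have repY2 := ode_rep (p := p) hh dY2 dY2' (fun z _ => rfl) HdY2
    have hdY2p : deriv Y2 h0 = 0 := by
      have h3 : ((lam:ℂ)+2*mu) * deriv Y2 h0 = 0 := by linear_combination hb2p
      exact (mul_eq_zero.mp h3).resolve_left hA
    have hdY2m : deriv Y2 (-h0) = 0 := by
      have h3 : ((lam:ℂ)+2*mu) * deriv Y2 (-h0) = 0 := by linear_combination hb2m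
      exact (mul_eq_zero.mp h3).resolve_left hA
    have rYp := (repY2 h0 hmemp).2
    have rYm := (repY2 (-h0) hmemm).2
    rw [hconeg, hsineg, hdY2m] at rYm
    rw [hdY2p] at rYp
    have hY21 : deriv Y2 0 = 0 := by
      have h3 : deriv Y2 0 * Complex.cos (p*(h0:ℝ)) = 0 := by
        linear_combination (-(1:ℂ)/2)*rYp - (1/2)*rYm
      exact (mul_eq_zero.mp h3).resolve_right hCp
    have hY20 : Y2 0 = 0 := by
      have h3 : p * Complex.sin (p*(h0:ℝ)) * Y2 0 = 0 := by
        linear_combination (1/2:ℂ)*rYp - (1/2)*rYm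
      rcases mul_eq_zero.mp h3 with h4|h4
      · exact absurd (mul_eq_zero.mp h4) (by push_neg; exact ⟨hp0, hSinp⟩)
      · exact h4
    have hY2z : ∀ z ∈ Icc (-h0) h0, Y2 z = 0 := by
      intro z hz
      have h3 := (repY2 z hz).1
      rw [hY20, hY21] at h3
      simpa using h3
    have hdY2z : ∀ z ∈ Icc (-h0) h0, deriv Y2 z = 0 := by
      intro z hz
      have h3 := (repY2 z hz).2
      rw [hY20, hY21] at h3
      simpa using h3
    have hY1z : ∀ z ∈ Icc (-h0) h0, Y1 z = 0 := by
      intro z hz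
      have h3 := E1 z hz
      rw [hdY2z z hz, hX1z z hz] at h3
      simpa using h3
    exact hnontriv fun z hz => ⟨hX1z z hz, hX2z z hz, hY1z z hz, hY2z z hz⟩
  · -- main case: build the two Helmholtz pairs (Phi, phi) and (psi, chi)
    set A : ℂ := (lam:ℂ)+2*mu with hAdef
    set phi : ℝ → ℂ := fun t => (Complex.I*k) * X2 t + (2*(mu:ℂ)*k^2-(om:ℂ)^2) * Y2 t with hphidef
    set psi : ℝ → ℂ := fun t => (Complex.I*k) * X2 t + (2*(mu:ℂ)*k^2) * Y2 t with hpsidef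
    set Phi : ℝ → ℂ := fun t => (A*(Complex.I*k)) * X1 t + A * deriv Y2 t with hPhidef
    set chi : ℝ → ℂ := fun t => (Complex.I*k*(A*k^2-(om:ℂ)^2)) * X1 t + (A*k^2) * deriv Y2 t
      with hchidef
    have dphi : Differentiable ℝ phi := (dX2.const_mul _).add (dY2.const_mul _)
    have dpsi : Differentiable ℝ psi := (dX2.const_mul _).add (dY2.const_mul _)
    have dPhi : Differentiable ℝ Phi := (dX1.const_mul _).add (dY2'.const_mul _)
    have dchi : Differentiable ℝ chi := (dX1.const_mul _).add (dY2'.const_mul _)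
    have HdPhi : ∀ z ∈ Icc (-h0) h0, deriv Phi z = phi z := by
      intro z hz
      rw [hPhidef, deriv_lincomb dX1 dY2' _ _ z]
      have h3 : (mu:ℂ) * ((A*(Complex.I*k)) * deriv X1 z + A * deriv (deriv Y2) z)
          = (mu:ℂ) * (phi z) := by
        rw [hphidef]
        linear_combination (A*Complex.I*k)*(E4 z hz) + ES z hz - (A*(mu:ℂ)*k^2*Y2 z)*hI2
      exact mul_left_cancel₀ hmu0 h3
    have Hdphi : ∀ z ∈ Icc (-h0) h0, deriv phi z = -p^2 * Phi z := by
      intro z hz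
      rw [hphidef, deriv_lincomb dX2 dY2 _ _ z]
      rw [hPhidef]
      linear_combination (Complex.I*k)*(E3 z hz) - ((lam:ℂ)*k^2*deriv Y2 z)*hI2
        + (Complex.I*k*X1 z + deriv Y2 z)*hp'
    have Hdpsi : ∀ z ∈ Icc (-h0) h0, deriv psi z = chi z := by
      intro z hz
      rw [hpsidef, deriv_lincomb dX2 dY2 _ _ z]
      rw [hchidef]
      linear_combination (Complex.I*k)*(E3 z hz) - ((lam:ℂ)*k^2*deriv Y2 z)*hI2
    have Hdchi : ∀ z ∈ Icc (-h0) h0, deriv chi z = -q^2 * psi z := by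
      intro z hz
      rw [hchidef, deriv_lincomb dX1 dY2' _ _ z]
      have h3 : (mu:ℂ) * ((Complex.I*k*(A*k^2-(om:ℂ)^2)) * deriv X1 z
            + (A*k^2) * deriv (deriv Y2) z)
          = (mu:ℂ) * (-q^2 * psi z) := by
        rw [hpsidef]
        linear_combination (Complex.I*k*(A*k^2-(om:ℂ)^2))*(E4 z hz) + k^2*(ES z hz)
          - ((mu:ℂ)*k^2*(A*k^2-(om:ℂ)^2)*Y2 z)*hI2 + (Complex.I*k*X2 z + 2*(mu:ℂ)*k^2*Y2 z)*hq'
      exact mul_left_cancel₀ hmu0 h3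
    have repP := ode_rep (p := p) hh dPhi dphi HdPhi Hdphi
    have repQ := ode_rep (p := q) hh dpsi dchi Hdpsi Hdchi
    -- boundary conditions in terms of the potentials
    have CEp : (2*(mu:ℂ)*k^2) * phi h0 + ((om:ℂ)^2 - 2*(mu:ℂ)*k^2) * psi h0 = 0 := by
      rw [hphidef, hpsidef]
      simp only [hB1.1]
      ring
    have CEm : (2*(mu:ℂ)*k^2) * phi (-h0) + ((om:ℂ)^2 - 2*(mu:ℂ)*k^2) * psi (-h0) = 0 := by
      rw [hphidef, hpsidef]
      simp only [hB1.2]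
      ring
    have CFp : ((om:ℂ)^2 - 2*(mu:ℂ)*k^2) * Phi h0 + (2*(mu:ℂ)) * chi h0 = 0 := by
      rw [hPhidef, hchidef]
      linear_combination (om:ℂ)^2 * hb2p
    have CFm : ((om:ℂ)^2 - 2*(mu:ℂ)*k^2) * Phi (-h0) + (2*(mu:ℂ)) * chi (-h0) = 0 := by
      rw [hPhidef, hchidef]
      linear_combination (om:ℂ)^2 * hb2m
    -- substitute representations
    obtain ⟨RPp, Rpp⟩ := repP h0 hmemp
    obtain ⟨RPm, Rpm⟩ := repP (-h0) hmemm
    obtain ⟨RQp, Rqp⟩ := repQ h0 hmemp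
    obtain ⟨RQm, Rqm⟩ := repQ (-h0) hmemm
    rw [hconeg, Spc_neg] at RPm RQm
    rw [hconeg, hsineg] at Rpm Rqm
    rw [Rpp, RQp] at CEp
    rw [Rpm, RQm] at CEm
    rw [RPp, Rqp] at CFp
    rw [RPm, Rqm] at CFm
    -- symmetric and antisymmetric 2x2 systems
    have S1 : (2*(mu:ℂ)*k^2*Complex.cos (p*(h0:ℝ))) * phi 0
        + (((om:ℂ)^2-2*(mu:ℂ)*k^2)*Complex.cos (q*(h0:ℝ))) * psi 0 = 0 := by
      linear_combination (1/2:ℂ)*CEp + (1/2:ℂ)*CEm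
    have S2 : (((om:ℂ)^2-2*(mu:ℂ)*k^2)*Spc p h0) * phi 0
        + (-(2*(mu:ℂ)*q*Complex.sin (q*(h0:ℝ)))) * psi 0 = 0 := by
      linear_combination (1/2:ℂ)*CFp - (1/2:ℂ)*CFm
    have A1 : (2*(mu:ℂ)*k^2*p*Complex.sin (p*(h0:ℝ))) * Phi 0
        + (-((om:ℂ)^2-2*(mu:ℂ)*k^2)*Spc q h0) * chi 0 = 0 := by
      linear_combination (1/2:ℂ)*CEm - (1/2:ℂ)*CEp
    have A2 : (((om:ℂ)^2-2*(mu:ℂ)*k^2)*Complex.cos (p*(h0:ℝ))) * Phi 0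
        + (2*(mu:ℂ)*Complex.cos (q*(h0:ℝ))) * chi 0 = 0 := by
      linear_combination (1/2:ℂ)*CFp + (1/2:ℂ)*CFm
    -- nonvanishing of p, q
    have hq0 : q ≠ 0 := by
      intro h
      apply hf1
      rw [h]
      simp
    have hp0 : p ≠ 0 := by
      intro h
      apply hf2
      rw [h]
      simp
    have hPs := p_mul_Spc p h0
    have hQs := p_mul_Spc q h0
    -- determinants equal (up to nonzero factors) the Rayleigh-Lamb factors
    have hdetS : p * ((2*(mu:ℂ)*k^2*Complex.cos (p*(h0:ℝ)))*(-(2*(mu:ℂ)*q*Complex.sin (q*(h0:ℝ))))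
        - (((om:ℂ)^2-2*(mu:ℂ)*k^2)*Complex.cos (q*(h0:ℝ)))*((((om:ℂ)^2-2*(mu:ℂ)*k^2)*Spc p h0)))
        = -(mu:ℂ)^2 * ((q^2-k^2)^2 * Complex.cos (q*h0) * Complex.sin (p*h0)
          + 4*k^2*p*q*Complex.cos (p*h0) * Complex.sin (q*h0)) := by
      linear_combination (p*Complex.cos (q*(h0:ℝ))*Spc p h0*((mu:ℂ)*(q^2-k^2)
          + ((om:ℂ)^2-2*(mu:ℂ)*k^2)))*hq'
        - ((mu:ℂ)^2*(q^2-k^2)^2*Complex.cos (q*(h0:ℝ)))*hPs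
    have hdetA : q * ((2*(mu:ℂ)*k^2*p*Complex.sin (p*(h0:ℝ)))*(2*(mu:ℂ)*Complex.cos (q*(h0:ℝ)))
        - (-((om:ℂ)^2-2*(mu:ℂ)*k^2)*Spc q h0)*((((om:ℂ)^2-2*(mu:ℂ)*k^2)*Complex.cos (p*(h0:ℝ)))))
        = (mu:ℂ)^2 * ((q^2-k^2)^2 * Complex.sin (q*h0) * Complex.cos (p*h0)
          + 4*k^2*p*q*Complex.sin (p*h0) * Complex.cos (q*h0)) := by
      linear_combination (-(Complex.cos (p*(h0:ℝ)))*(Spc q h0)*q*(((om:ℂ)^2-2*(mu:ℂ)*k^2)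
          + (mu:ℂ)*(q^2-k^2)))*hq'
        + ((mu:ℂ)^2*(q^2-k^2)^2*Complex.cos (p*(h0:ℝ)))*hQs
    have hdetSne : (2*(mu:ℂ)*k^2*Complex.cos (p*(h0:ℝ)))*(-(2*(mu:ℂ)*q*Complex.sin (q*(h0:ℝ))))
        - (((om:ℂ)^2-2*(mu:ℂ)*k^2)*Complex.cos (q*(h0:ℝ)))*((((om:ℂ)^2-2*(mu:ℂ)*k^2)*Spc p h0)) ≠ 0 := by
      intro h
      rw [h, mul_zero] at hdetS
      have := (mul_eq_zero.mp hdetS.symm).resolve_left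
        (neg_ne_zero.mpr (pow_ne_zero 2 hmu0))
      exact hf2 this
    have hdetAne : (2*(mu:ℂ)*k^2*p*Complex.sin (p*(h0:ℝ)))*(2*(mu:ℂ)*Complex.cos (q*(h0:ℝ)))
        - (-((om:ℂ)^2-2*(mu:ℂ)*k^2)*Spc q h0)*((((om:ℂ)^2-2*(mu:ℂ)*k^2)*Complex.cos (p*(h0:ℝ)))) ≠ 0 := by
      intro h
      rw [h, mul_zero] at hdetA
      have := (mul_eq_zero.mp hdetA.symm).resolve_left (pow_ne_zero 2 hmu0)
      exact hf1 this
    obtain ⟨hphi0, hpsi0⟩ := lin22 S1 S2 hdetSne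
    obtain ⟨hPhi0, hchi0⟩ := lin22 A1 A2 hdetAne
    -- all potentials vanish, hence the solution is trivial
    have hphiz : ∀ z ∈ Icc (-h0) h0, phi z = 0 := by
      intro z hz
      have h3 := (repP z hz).2
      rw [hphi0, hPhi0] at h3
      simpa using h3
    have hPhiz : ∀ z ∈ Icc (-h0) h0, Phi z = 0 := by
      intro z hz
      have h3 := (repP z hz).1
      rw [hphi0, hPhi0] at h3
      simpa using h3
    have hpsiz : ∀ z ∈ Icc (-h0) h0, psi z = 0 := by
      intro z hz
      have h3 := (repQ z hz).1
      rw [hpsi0, hchi0] at h3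
      simpa using h3
    have hom2 : ((om:ℝ):ℂ)^2 ≠ 0 := pow_ne_zero 2 hom
    have hIk : Complex.I * k ≠ 0 := mul_ne_zero Complex.I_ne_zero hk
    have hY2z : ∀ z ∈ Icc (-h0) h0, Y2 z = 0 := by
      intro z hz
      have h3 : ((om:ℝ):ℂ)^2 * Y2 z = psi z - phi z := by rw [hphidef, hpsidef]; ring
      rw [hphiz z hz, hpsiz z hz] at h3
      simpa using (mul_eq_zero.mp (by simpa using h3)).resolve_left hom2
    have hX2z : ∀ z ∈ Icc (-h0) h0, X2 z = 0 := by
      intro z hz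
      have h3 : (Complex.I*k) * X2 z = psi z - (2*(mu:ℂ)*k^2) * Y2 z := by
        rw [hpsidef]; ring
      rw [hpsiz z hz, hY2z z hz] at h3
      simpa using (mul_eq_zero.mp (by simpa using h3)).resolve_left hIk
    have hdY2z : ∀ z ∈ Icc (-h0) h0, deriv Y2 z = 0 := by
      have h3 := derivEqOn hh dY2 (differentiable_const (0:ℂ)) hY2z
      intro z hz
      rw [h3 z hz, deriv_const]
    have hX1z : ∀ z ∈ Icc (-h0) h0, X1 z = 0 := by
      intro z hz
      have h3 : (A*(Complex.I*k)) * X1 z = Phi z - A * deriv Y2 z := by rw [hPhidef]; ring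
      rw [hPhiz z hz, hdY2z z hz] at h3
      simpa using (mul_eq_zero.mp (by simpa using h3)).resolve_left
        (mul_ne_zero hA hIk)
    have hY1z : ∀ z ∈ Icc (-h0) h0, Y1 z = 0 := by
      intro z hz
      have h3 := E1 z hz
      rw [hdY2z z hz, hX1z z hz] at h3
      simpa using h3
    exact hnontriv fun z hz => ⟨hX1z z hz, hX2z z hz, hY1z z hz, hY2z z hz⟩
end

section
/- Let λ, μ, ω ∈ ℝ with μ > 0, λ + 2μ > 0, let Ω ⊆ ℝ² be open, and let u, v : Ω → ℂ be C² and f₁, f₂ : Ω → ℂ continuous. Define s = (λ+2μ)∂ₓu + λ∂_z v, t = μ(∂_z u + ∂ₓ v), r = λ∂ₓu + (λ+2μ)∂_z v. Assume the elasticity system holds in Ω: ∂ₓ s + ∂_z t + ω² u = −f₁ and ∂ₓ t + ∂_z r + ω² v = −f₂. Then, setting X = (u, t) and Y = (−s, v), the following first-order system holds in Ω: ∂ₓ X₁ = F(Y)₁, ∂ₓ X₂ = F(Y)₂ − f₂, ∂ₓ Y₁ = G(X)₁ + f₁, ∂ₓ Y₂ = G(X)₂, where F and G are applied in the variable z at each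 fixed x. -/
open Complex Set

/-- Partial derivative in the `x` direction of a function on `ℝ²`. -/
noncomputable def pdx (f : ℝ × ℝ → ℂ) (p : ℝ × ℝ) : ℂ := fderiv ℝ f p (1, 0)

/-- Partial derivative in the `z` direction of a function on `ℝ²`. -/
noncomputable def pdz (f : ℝ × ℝ → ℂ) (p : ℝ × ℝ) : ℂ := fderiv ℝ f p (0, 1)

lemma pdz_comb (a b : ℂ) (f g : ℝ × ℝ → ℂ) (p : ℝ × ℝ)
    (hf : DifferentiableAt ℝ f p) (hg : DifferentiableAt ℝ g p) :
    pdz (fun q => a * f q + b * g q) p = a * pdz f p + b * pdz g p := by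
  have h : fderiv ℝ (fun q => a * f q + b * g q) p = _ := ((hf.hasFDerivAt.const_mul a).add (hg.hasFDerivAt.const_mul b)).fderiv
  simp only [pdz, h, ContinuousLinearMap.add_apply, ContinuousLinearMap.smul_apply,
    smul_eq_mul]

lemma pd_neg (f : ℝ × ℝ → ℂ) (p : ℝ × ℝ) (w : ℝ × ℝ) :
    fderiv ℝ (fun q => -(f q)) p w = -(fderiv ℝ f p w) := by
  rw [fderiv_fun_neg]; simp

/-- **The X/Y formulation of 2D elasticity.** If `(u, v)` is a C² solution of the
time-harmonic elasticity system `∇·σ(u,v) + ω²(u,v) = −(f₁,f₂)` in an open set `Ω`,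
then with `X = (u, t)` and `Y = (−s, v)` (where `s, t, r` are the entries of the stress
tensor) the first-order system `∂ₓX = F(Y) + (0, −f₂)`, `∂ₓY = G(X) + (f₁, 0)` holds in
`Ω`, `F` and `G` acting in the variable `z`. -/
theorem elasticity_XY_formulation
    (lam mu om : ℝ) (hmu : 0 < mu) (hlm : 0 < lam + 2*mu)
    (Ω : Set (ℝ × ℝ)) (hΩ : IsOpen Ω)
    (u v f₁ f₂ : ℝ × ℝ → ℂ)
    (hu : ContDiffOn ℝ 2 u Ω) (hv : ContDiffOn ℝ 2 v Ω)
    (hf₁ : ContinuousOn f₁ Ω) (hf₂ : ContinuousOn f₂ Ω)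
    (s t r : ℝ × ℝ → ℂ)
    (hs : s = fun p => ((lam:ℂ)+2*(mu:ℂ)) * pdx u p + (lam:ℂ) * pdz v p)
    (ht : t = fun p => (mu:ℂ) * (pdz u p + pdx v p))
    (hr : r = fun p => (lam:ℂ) * pdx u p + ((lam:ℂ)+2*(mu:ℂ)) * pdz v p)
    (helas1 : ∀ p ∈ Ω, pdx s p + pdz t p + (om:ℂ)^2 * u p = -(f₁ p))
    (helas2 : ∀ p ∈ Ω, pdx t p + pdz r p + (om:ℂ)^2 * v p = -(f₂ p)) :
    ∀ p ∈ Ω,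
      (pdx u p = -(-(s p))/((lam:ℂ)+2*(mu:ℂ))
          - ((lam:ℂ)/((lam:ℂ)+2*(mu:ℂ))) * pdz v p)
      ∧ (pdx t p = ((lam:ℂ)/((lam:ℂ)+2*(mu:ℂ))) * pdz (fun q => -(s q)) p
          - (om:ℂ)^2 * v p
          - ((4*(mu:ℂ)*((lam:ℂ)+(mu:ℂ)))/((lam:ℂ)+2*(mu:ℂ))) * pdz (fun q => pdz v q) p
          - f₂ p)
      ∧ (pdx (fun q => -(s q)) p = (om:ℂ)^2 * u p + pdz t p + f₁ p)
      ∧ (pdx v p = -(pdz u p) + t p/(mu:ℂ)) := by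
  intro p hp
  have hL : ((lam:ℂ)+2*(mu:ℂ)) ≠ 0 := by
    have : ((lam + 2*mu : ℝ) : ℂ) ≠ 0 := by exact_mod_cast hlm.ne'
    push_cast at this; exact this
  have hM : (mu:ℂ) ≠ 0 := by exact_mod_cast hmu.ne'
  -- differentiability of pdx u and pdz v at p
  have hud : DifferentiableOn ℝ (fun q => fderiv ℝ u q) Ω :=
    (hu.fderiv_of_isOpen hΩ (m := 1) (by norm_num)).differentiableOn one_ne_zero
  have hvd : DifferentiableOn ℝ (fun q => fderiv ℝ v q) Ω :=
    (hv.fderiv_of_isOpen hΩ (m := 1) (by norm_num)).differentiableOn one_ne_zero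
  have hpd : Ω ∈ nhds p := hΩ.mem_nhds hp
  have hA : DifferentiableAt ℝ (fun q => pdx u q) p :=
    ((hud p hp).differentiableAt hpd).clm_apply (differentiableAt_const _)
  have hB : DifferentiableAt ℝ (fun q => pdz v q) p :=
    ((hvd p hp).differentiableAt hpd).clm_apply (differentiableAt_const _)
  -- pdz of s and r
  have hzs : pdz s p = ((lam:ℂ)+2*(mu:ℂ)) * pdz (fun q => pdx u q) p
      + (lam:ℂ) * pdz (fun q => pdz v q) p := by
    rw [hs]; exact pdz_comb _ _ _ _ p hA hB
  have hzr : pdz r p = (lam:ℂ) * pdz (fun q => pdx u q) p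
      + ((lam:ℂ)+2*(mu:ℂ)) * pdz (fun q => pdz v q) p := by
    rw [hr]; exact pdz_comb _ _ _ _ p hA hB
  have hzns : pdz (fun q => -(s q)) p = -(pdz s p) := pd_neg s p _
  have hxns : pdx (fun q => -(s q)) p = -(pdx s p) := pd_neg s p _
  have h1 := helas1 p hp
  have h2 := helas2 p hp
  refine ⟨?_, ?_, ?_, ?_⟩
  · have := congrFun hs p
    field_simp
    linear_combination -this
  · rw [hzns, hzs]
    field_simp
    linear_combination ((lam:ℂ)+2*(mu:ℂ)) * h2 - ((lam:ℂ)+2*(mu:ℂ)) * hzr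
  · rw [hxns]; linear_combination -h1
  · have := congrFun ht p
    field_simp
    linear_combination -this
end

section
/- Let k ∈ ℂ with k ≠ 0 and Im(k) ≥ 0. Let a, b : ℝ → ℂ be differentiable functions satisfying a′(x) = ik b(x) and b′(x) = ik a(x) for all x ∈ ℝ, and assume the outgoing conditions: a′(x) − ik a(x) → 0 and b′(x) − ik b(x) → 0 as x → +∞, and −a′(x) − ik a(x) → 0 and −b′(x) − ik b(x) → 0 as x → −∞. Then a ≡ 0 and b ≡ 0 on ℝ. -/
open Complex Filter

private lemma aux_tendsto_zero (c w : ℂ) (hw : 0 ≤ w.re)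
    (h : Tendsto (fun x : ℝ => c * Complex.exp (w * x)) atTop (nhds 0)) : c = 0 := by
  by_contra hc
  have hnorm : Tendsto (fun x : ℝ => ‖c * Complex.exp (w * x)‖) atTop (nhds 0) := by
    simpa using h.norm
  have hcpos : (0:ℝ) < ‖c‖ := norm_pos_iff.mpr hc
  have hev : ∀ᶠ x : ℝ in atTop, ‖c * Complex.exp (w * x)‖ < ‖c‖ :=
    hnorm.eventually_lt_const hcpos
  have hge : ∀ᶠ x : ℝ in atTop, (0:ℝ) ≤ x := eventually_ge_atTop 0
  obtain ⟨x, hx1, hx2⟩ := (hev.and hge).exists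
  have : ‖c‖ ≤ ‖c * Complex.exp (w * x)‖ := by
    rw [norm_mul, Complex.norm_exp]
    have hre : (w * (x:ℂ)).re = w.re * x := by simp [Complex.mul_re]
    rw [hre]
    nlinarith [Real.one_le_exp (mul_nonneg hw hx2), hcpos]
  linarith

private lemma aux_exp_sol (w : ℂ) (u : ℝ → ℂ) (hdu : Differentiable ℝ u)
    (hu : ∀ x, deriv u x = -w * u x) :
    ∀ x : ℝ, u x = u 0 * Complex.exp (-w * x) := by
  have hexp : ∀ x : ℝ, HasDerivAt (fun x : ℝ => Complex.exp (w * x))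
      (Complex.exp (w * x) * w) x := by
    intro x
    have h1 : HasDerivAt (fun x : ℝ => w * (x:ℂ)) w x := by
      simpa using (Complex.ofRealCLM.hasDerivAt (x := x)).const_mul w
    exact h1.cexp
  have hconst : ∀ x : ℝ, u x * Complex.exp (w * x) = u 0 * Complex.exp (w * 0) := by
    have hd : Differentiable ℝ (fun x : ℝ => u x * Complex.exp (w * x)) :=
      hdu.mul (fun x => (hexp x).differentiableAt)
    have hz : ∀ x : ℝ, deriv (fun x : ℝ => u x * Complex.exp (w * x)) x = 0 := by
      intro x
      rw [((hdu x).hasDerivAt.fun_mul (hexp x)).deriv, hu x]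
      ring
    intro x
    exact is_const_of_deriv_eq_zero hd hz x 0
  intro x
  have h := hconst x
  simp only [Complex.ofReal_zero, mul_zero, Complex.exp_zero, mul_one] at h
  calc u x = u x * Complex.exp (w * x) * Complex.exp (-w * x) := by
        rw [mul_assoc, ← Complex.exp_add]
        rw [show w * (x:ℂ) + -w * x = 0 from by ring, Complex.exp_zero, mul_one]
    _ = u 0 * Complex.exp (-w * x) := by rw [h]

/-- **Uniqueness for outgoing modal coefficients.** If `k ≠ 0` with `Im k ≥ 0`, and
`a, b : ℝ → ℂ` are differentiable with `a′ = ikb`, `b′ = ika`, and satisfy the outgoing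
conditions `a′ − ika → 0`, `b′ − ikb → 0` at `+∞` and `−a′ − ika → 0`, `−b′ − ikb → 0`
at `−∞`, then `a ≡ 0` and `b ≡ 0`. -/
theorem outgoing_modal_uniqueness
    (k : ℂ) (hk : k ≠ 0) (him : 0 ≤ k.im)
    (a b : ℝ → ℂ) (hda : Differentiable ℝ a) (hdb : Differentiable ℝ b)
    (ha : ∀ x : ℝ, deriv a x = Complex.I * k * b x)
    (hb : ∀ x : ℝ, deriv b x = Complex.I * k * a x)
    (hout1 : Tendsto (fun x : ℝ => deriv a x - Complex.I * k * a x) atTop (nhds 0))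
    (hout2 : Tendsto (fun x : ℝ => deriv b x - Complex.I * k * b x) atTop (nhds 0))
    (hout3 : Tendsto (fun x : ℝ => -(deriv a x) - Complex.I * k * a x) atBot (nhds 0))
    (hout4 : Tendsto (fun x : ℝ => -(deriv b x) - Complex.I * k * b x) atBot (nhds 0)) :
    ∀ x : ℝ, a x = 0 ∧ b x = 0 := by
  set w : ℂ := Complex.I * k with hw
  have hwre : 0 ≤ (-w).re := by simp [hw, Complex.mul_re]; exact him
  have hwne : w ≠ 0 := by simp [hw, hk, Complex.I_ne_zero]
  have hu : ∀ x : ℝ, a x - b x = (a 0 - b 0) * Complex.exp (-w * x) := by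
    apply aux_exp_sol w (fun x => a x - b x) (hda.sub hdb)
    intro x
    rw [deriv_fun_sub (hda x) (hdb x), ha x, hb x]
    ring
  have hv : ∀ x : ℝ, a x + b x = (a 0 + b 0) * Complex.exp (-(-w) * x) := by
    apply aux_exp_sol (-w) (fun x => a x + b x) (hda.add hdb)
    intro x
    rw [deriv_fun_add (hda x) (hdb x), ha x, hb x]
    ring
  have hu0 : a 0 - b 0 = 0 := by
    have h : Tendsto (fun x : ℝ => (-w * (a 0 - b 0)) * Complex.exp (-w * x)) atTop (nhds 0) := by
      have heq : (fun x : ℝ => deriv a x - w * a x)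
          = fun x : ℝ => (-w * (a 0 - b 0)) * Complex.exp (-w * x) := by
        funext x
        rw [ha x]
        linear_combination (-w) * hu x
      rwa [heq] at hout1
    have hc := aux_tendsto_zero (-w * (a 0 - b 0)) (-w) hwre h
    rcases mul_eq_zero.mp hc with h' | h'
    · exact absurd (neg_eq_zero.mp h') hwne
    · exact h'
  have hv0 : a 0 + b 0 = 0 := by
    have h : Tendsto (fun x : ℝ => (-w * (a 0 + b 0)) * Complex.exp (-w * x)) atTop (nhds 0) := by
      have h0 := hout3.comp tendsto_neg_atTop_atBot
      have heq : (fun x : ℝ => -(deriv a x) - w * a x) ∘ (fun x : ℝ => -x)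
          = fun x : ℝ => (-w * (a 0 + b 0)) * Complex.exp (-w * x) := by
        funext x
        simp only [Function.comp]
        rw [ha (-x)]
        have hv' : a (-x) + b (-x) = (a 0 + b 0) * Complex.exp (-w * x) := by
          rw [hv (-x)]
          congr 2
          push_cast
          ring
        linear_combination (-w) * hv'
      rwa [heq] at h0
    have hc := aux_tendsto_zero (-w * (a 0 + b 0)) (-w) hwre h
    rcases mul_eq_zero.mp hc with h' | h'
    · exact absurd (neg_eq_zero.mp h') hwne
    · exact h'
  intro x
  have h1 := hu x
  have h2 := hv x
  rw [hu0] at h1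
  rw [hv0] at h2
  simp only [zero_mul] at h1 h2
  constructor
  · linear_combination (h1 + h2) / 2
  · linear_combination (h2 - h1) / 2
end

section
/- Let k ∈ ℂ, and let F₁, F₂ : ℝ → ℂ be continuous functions with compact support. Define G₁(x) = e^{ik|x|}/2 and G₂(x) = (x/|x|)·e^{ik|x|}/2 (G₂(0) = 0), and set a = G₁∗F₁ − G₂∗F₂ and b = G₂∗F₁ − G₁∗F₂, where (g∗f)(x) = ∫_ℝ g(x−y) f(y) dy. Then a and b are differentiable on ℝ and satisfy a′(x) = ik b(x) − F₂(x) and b′(x) = ik a(x) + F₁(x) for all x ∈ ℝ. In particular, if F₁ and F₂ are C¹, then a and b solve the decoupled Helmholtz equations a″ + k²a = ikF₁ − F₂′ and b″ + k²b = F₁′ − ikF₂. -/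
open Complex MeasureTheory

open Set

lemma conv_integrable (k : ℂ) (G F : ℝ → ℂ) (hG : Measurable G)
    (hbd : ∀ t : ℝ, ‖G t‖ ≤ Real.exp (‖k‖ * |t|)) (hF : Continuous F)
    (hs : HasCompactSupport F) (x : ℝ) :
    Integrable (fun y => G (x - y) * F y) := by
  obtain ⟨M, hM⟩ : ∃ M, ∀ y, ‖F y‖ ≤ M := by
    obtain ⟨C, hC⟩ := (hF.norm.bddAbove_range_of_hasCompactSupport hs.norm).exists_ge 0
    exact ⟨C, fun y => hC.2 _ ⟨y, rfl⟩⟩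
  obtain ⟨R, hR⟩ : ∃ R, tsupport F ⊆ Metric.closedBall 0 R :=
    (hs.isBounded).subset_closedBall 0
  have hM0 : 0 ≤ M := le_trans (norm_nonneg _) (hM 0)
  refine Integrable.mono'
    (g := Set.indicator (Metric.closedBall (0:ℝ) R)
      (fun _ => Real.exp (‖k‖ * (|x| + |R|)) * M))
    ((integrableOn_const measure_closedBall_lt_top.ne).integrable_indicator
      measurableSet_closedBall) ?_
    (Filter.Eventually.of_forall fun y => ?_)
  · exact ((hG.comp (measurable_const.sub measurable_id)).mul hF.measurable).aestronglyMeasurable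
  · by_cases hy : y ∈ Metric.closedBall (0:ℝ) R
    · rw [Set.indicator_of_mem hy]
      have hyR : |y| ≤ R := by
        simpa [Real.dist_eq] using Metric.mem_closedBall.1 hy
      have h1 : ‖G (x - y)‖ ≤ Real.exp (‖k‖ * (|x| + |R|)) := by
        refine (hbd _).trans (Real.exp_le_exp.2 ?_)
        have h2 : |x - y| ≤ |x| + |R| := by
          calc |x - y| ≤ |x| + |y| := abs_sub _ _
            _ ≤ |x| + |R| := by have := le_abs_self R; linarith
        exact mul_le_mul_of_nonneg_left h2 (norm_nonneg k)
      calc ‖G (x - y) * F y‖ = ‖G (x-y)‖ * ‖F y‖ := norm_mul _ _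
        _ ≤ Real.exp (‖k‖ * (|x| + |R|)) * M :=
          mul_le_mul h1 (hM y) (norm_nonneg _) (Real.exp_nonneg _)
    · rw [Set.indicator_of_notMem hy, image_eq_zero_of_notMem_tsupport (fun h => hy (hR h)),
        mul_zero, norm_zero]

lemma exp_norm_le (k : ℂ) (t : ℝ) :
    ‖Complex.exp (Complex.I * k * t)‖ ≤ Real.exp (‖k‖ * |t|) := by
  rw [Complex.norm_exp]
  refine Real.exp_le_exp.2 ?_
  have h1 : (Complex.I * k * t).re = -k.im * t := by
    simp [Complex.mul_re, Complex.mul_im]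
  rw [h1]
  calc -k.im * t = -(k.im * t) := neg_mul _ _
    _ ≤ |k.im * t| := neg_le_abs _
    _ = |k.im| * |t| := abs_mul _ _
    _ ≤ ‖k‖ * |t| := mul_le_mul_of_nonneg_right (Complex.abs_im_le_norm k) (abs_nonneg t)

lemma hm₁ (k : ℂ) : Measurable (fun t : ℝ => Complex.exp (Complex.I * k * |t|) / 2) :=
  (Continuous.div_const (by continuity) 2).measurable

lemma hm₂ (k : ℂ) : Measurable
    (fun t : ℝ => ((t / |t| : ℝ) : ℂ) * Complex.exp (Complex.I * k * |t|) / 2) := by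
  have h1 : Measurable (fun t : ℝ => ((t / |t| : ℝ) : ℂ)) :=
    Complex.measurable_ofReal.comp (measurable_id.div continuous_abs.measurable)
  have h2 : Measurable (fun t : ℝ => Complex.exp (Complex.I * k * |t|)) :=
    (Continuous.cexp (by continuity)).measurable
  exact (h1.mul h2).div_const 2

lemma hb₁ (k : ℂ) (t : ℝ) :
    ‖Complex.exp (Complex.I * k * |t|) / 2‖ ≤ Real.exp (‖k‖ * |t|) := by
  rw [norm_div]
  have h0 := exp_norm_le k |t|
  rw [_root_.abs_abs] at h0
  have h2 : ‖(2:ℂ)‖ = 2 := by norm_num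
  rw [h2]
  linarith [Real.exp_nonneg (‖k‖ * |t|)]

lemma hb₂ (k : ℂ) (t : ℝ) :
    ‖((t / |t| : ℝ) : ℂ) * Complex.exp (Complex.I * k * |t|) / 2‖ ≤ Real.exp (‖k‖ * |t|) := by
  rw [norm_div, norm_mul]
  have h1 : ‖((t / |t| : ℝ) : ℂ)‖ ≤ 1 := by
    rw [Complex.norm_real, Real.norm_eq_abs, abs_div, _root_.abs_abs]
    exact div_self_le_one _
  have h0 := exp_norm_le k |t|
  rw [_root_.abs_abs] at h0
  have h2 : ‖(2:ℂ)‖ = 2 := by norm_num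
  rw [h2]
  nlinarith [Real.exp_nonneg (‖k‖ * |t|), norm_nonneg (Complex.exp (Complex.I * k * (|t|:ℝ)))]

lemma green_sum (k : ℂ) (F : ℝ → ℂ) (hF : Continuous F) (hs : HasCompactSupport F) (x : ℝ) :
    (∫ y : ℝ, Complex.exp (Complex.I * k * |x - y|) / 2 * F y)
      + (∫ y : ℝ, ((x - y) / |x - y| : ℝ) * Complex.exp (Complex.I * k * |x - y|) / 2 * F y)
    = ∫ y in Iic x, Complex.exp (Complex.I * k * ((x : ℂ) - y)) * F y := by
  have int₁ := conv_integrable k _ F (hm₁ k) (hb₁ k) hF hs x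
  have int₂ := conv_integrable k _ F (hm₂ k) (hb₂ k) hF hs x
  rw [← integral_add int₁ int₂, ← integral_indicator measurableSet_Iic]
  refine integral_congr_ae ?_
  have hx : ∀ᵐ y : ℝ, y ≠ x := by simp [ae_iff, Real.volume_singleton]
  filter_upwards [hx] with y hy
  rcases lt_or_gt_of_ne hy with hlt | hgt
  · -- y < x : in Iic
    have hpos : (0:ℝ) < x - y := by linarith
    rw [Set.indicator_of_mem (show y ∈ Set.Iic x from hlt.le)]
    rw [abs_of_pos hpos, div_self (ne_of_gt hpos)]
    push_cast
    ring
  · -- y > x : outside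
    have hneg : x - y < 0 := by linarith
    rw [Set.indicator_of_notMem (show y ∉ Set.Iic x from not_le.2 hgt)]
    rw [abs_of_neg hneg]
    have : (x - y) / -(x - y) = -1 := by
      rw [div_neg, div_self (ne_of_lt hneg)]
    rw [this]
    push_cast
    ring

lemma green_diff (k : ℂ) (F : ℝ → ℂ) (hF : Continuous F) (hs : HasCompactSupport F) (x : ℝ) :
    (∫ y : ℝ, Complex.exp (Complex.I * k * |x - y|) / 2 * F y)
      - (∫ y : ℝ, ((x - y) / |x - y| : ℝ) * Complex.exp (Complex.I * k * |x - y|) / 2 * F y)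
    = ∫ y in Ici x, Complex.exp (Complex.I * k * ((y : ℂ) - x)) * F y := by
  have int₁ := conv_integrable k _ F (hm₁ k) (hb₁ k) hF hs x
  have int₂ := conv_integrable k _ F (hm₂ k) (hb₂ k) hF hs x
  rw [← integral_sub int₁ int₂, ← integral_indicator measurableSet_Ici]
  refine integral_congr_ae ?_
  have hx : ∀ᵐ y : ℝ, y ≠ x := by simp [ae_iff, Real.volume_singleton]
  filter_upwards [hx] with y hy
  rcases lt_or_gt_of_ne hy with hlt | hgt
  · have hpos : (0:ℝ) < x - y := by linarith
    rw [Set.indicator_of_notMem (show y ∉ Set.Ici x from not_le.2 hlt)]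
    rw [abs_of_pos hpos, div_self (ne_of_gt hpos)]
    push_cast
    ring
  · have hneg : x - y < 0 := by linarith
    rw [Set.indicator_of_mem (show y ∈ Set.Ici x from hgt.le)]
    rw [abs_of_neg hneg]
    have : (x - y) / -(x - y) = -1 := by
      rw [div_neg, div_self (ne_of_lt hneg)]
    rw [this]
    push_cast
    ring

/-- **Convolution with the 1D outgoing Green functions solves the modal system.** For
continuous compactly supported `F₁, F₂` and `a = G₁∗F₁ − G₂∗F₂`, `b = G₂∗F₁ − G₁∗F₂`,
the functions `a, b` are differentiable with `a′ = ikb − F₂` and `b′ = ika + F₁`; in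
particular, if `F₁, F₂` are C¹ then `a″ + k²a = ikF₁ − F₂′` and `b″ + k²b = F₁′ − ikF₂`. -/
theorem green_convolution_modal_system
    (k : ℂ) (F₁ F₂ : ℝ → ℂ)
    (hF₁ : Continuous F₁) (hF₂ : Continuous F₂)
    (hs₁ : HasCompactSupport F₁) (hs₂ : HasCompactSupport F₂)
    (G₁ G₂ a b : ℝ → ℂ)
    (hG₁ : G₁ = fun x : ℝ => Complex.exp (Complex.I * k * |x|) / 2)
    (hG₂ : G₂ = fun x : ℝ => ((x / |x| : ℝ) : ℂ) * Complex.exp (Complex.I * k * |x|) / 2)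
    (ha : a = fun x : ℝ => (∫ y : ℝ, G₁ (x - y) * F₁ y) - ∫ y : ℝ, G₂ (x - y) * F₂ y)
    (hb : b = fun x : ℝ => (∫ y : ℝ, G₂ (x - y) * F₁ y) - ∫ y : ℝ, G₁ (x - y) * F₂ y) :
    (∀ x : ℝ, HasDerivAt a (Complex.I * k * b x - F₂ x) x
      ∧ HasDerivAt b (Complex.I * k * a x + F₁ x) x)
    ∧ (ContDiff ℝ 1 F₁ → ContDiff ℝ 1 F₂ → ∀ x : ℝ,
        deriv (deriv a) x + k^2 * a x = Complex.I * k * F₁ x - deriv F₂ x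
        ∧ deriv (deriv b) x + k^2 * b x = deriv F₁ x - Complex.I * k * F₂ x) := by
  -- the auxiliary functions
  set ψ : ℝ → ℂ := fun y => Complex.exp (-(Complex.I * k * y)) * (F₁ y - F₂ y) with hψ
  set χ : ℝ → ℂ := fun y => Complex.exp (Complex.I * k * y) * (F₁ y + F₂ y) with hχ
  have ψc : Continuous ψ := by
    exact (Continuous.cexp (by continuity)).mul (hF₁.sub hF₂)
  have χc : Continuous χ := by
    exact (Continuous.cexp (by continuity)).mul (hF₁.add hF₂)
  have hcup : IsCompact (tsupport F₁ ∪ tsupport F₂) := hs₁.union hs₂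
  have hsub : HasCompactSupport (fun y => F₁ y - F₂ y) := by
    apply HasCompactSupport.of_support_subset_isCompact hcup
    intro y hy
    by_contra hmem
    simp only [Set.mem_union, not_or] at hmem
    have h1 : F₁ y = 0 := image_eq_zero_of_notMem_tsupport hmem.1
    have h2 : F₂ y = 0 := image_eq_zero_of_notMem_tsupport hmem.2
    simp [Function.mem_support, h1, h2] at hy
  have hadd : HasCompactSupport (fun y => F₁ y + F₂ y) := by
    apply HasCompactSupport.of_support_subset_isCompact hcup
    intro y hy
    by_contra hmem
    simp only [Set.mem_union, not_or] at hmem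
    have h1 : F₁ y = 0 := image_eq_zero_of_notMem_tsupport hmem.1
    have h2 : F₂ y = 0 := image_eq_zero_of_notMem_tsupport hmem.2
    simp [Function.mem_support, h1, h2] at hy
  have ψs : HasCompactSupport ψ := HasCompactSupport.mul_left hsub
  have χs : HasCompactSupport χ := HasCompactSupport.mul_left hadd
  have ψi : Integrable ψ := ψc.integrable_of_hasCompactSupport ψs
  have χi : Integrable χ := χc.integrable_of_hasCompactSupport χs
  set Cψ : ℂ := ∫ y in Iic (0:ℝ), ψ y with hCψ
  set Cχ : ℂ := ∫ y in Iic (0:ℝ), χ y with hCχ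
  set T : ℂ := ∫ y : ℝ, χ y with hT
  -- values of the Iic / Ici integrals
  have hIic : ∀ x : ℝ, (∫ y in Iic x, Complex.exp (Complex.I * k * ((x : ℂ) - y)) * (F₁ y - F₂ y))
      = Complex.exp (Complex.I * k * x) * (Cψ + ∫ t in (0:ℝ)..x, ψ t) := by
    intro x
    have h1 : ∀ y : ℝ, Complex.exp (Complex.I * k * ((x : ℂ) - y)) * (F₁ y - F₂ y)
        = Complex.exp (Complex.I * k * x) * ψ y := by
      intro y
      simp only [hψ]
      rw [show Complex.I * k * ((x:ℂ) - y) = Complex.I * k * x + -(Complex.I * k * y) from by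
        ring, Complex.exp_add]
      ring
    simp_rw [h1]
    rw [integral_const_mul _ _]
    congr 1
    have h2 := intervalIntegral.integral_Iic_sub_Iic (ψi.integrableOn) (ψi.integrableOn)
      (a := (0:ℝ)) (b := x)
    linear_combination h2
  have hIci : ∀ x : ℝ, (∫ y in Ici x, Complex.exp (Complex.I * k * ((y : ℂ) - x)) * (F₁ y + F₂ y))
      = Complex.exp (-(Complex.I * k * x)) * (T - Cχ - ∫ t in (0:ℝ)..x, χ t) := by
    intro x
    have h1 : ∀ y : ℝ, Complex.exp (Complex.I * k * ((y : ℂ) - x)) * (F₁ y + F₂ y)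
        = Complex.exp (-(Complex.I * k * x)) * χ y := by
      intro y
      simp only [hχ]
      rw [show Complex.I * k * ((y:ℂ) - x) = -(Complex.I * k * x) + Complex.I * k * y from by
        ring, Complex.exp_add]
      ring
    simp_rw [h1]
    rw [integral_const_mul _ _]
    congr 1
    have h2 := intervalIntegral.integral_Iio_add_Ici (χi.integrableOn) (χi.integrableOn) (b := x)
    have h3 : (∫ y in Iio x, χ y) = ∫ y in Iic x, χ y :=
      (MeasureTheory.integral_Iic_eq_integral_Iio).symm
    have h4 := intervalIntegral.integral_Iic_sub_Iic (χi.integrableOn) (χi.integrableOn)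
      (a := (0:ℝ)) (b := x)
    linear_combination h2 - h3 - h4 - hT
  -- continuity / integrability of the exponential kernels
  have contE : ∀ x : ℝ, Continuous (fun y : ℝ => Complex.exp (Complex.I * k * ((x:ℂ) - y))) := by
    intro x
    exact Complex.continuous_exp.comp (by continuity)
  have contE' : ∀ x : ℝ, Continuous (fun y : ℝ => Complex.exp (Complex.I * k * ((y:ℂ) - x))) := by
    intro x
    exact Complex.continuous_exp.comp (by continuity)
  have i1 : ∀ (x : ℝ) (F : ℝ → ℂ), Continuous F → HasCompactSupport F →
      Integrable (fun y : ℝ => Complex.exp (Complex.I * k * ((x:ℂ) - y)) * F y) := by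
    intro x F hF hs
    exact ((contE x).mul hF).integrable_of_hasCompactSupport (HasCompactSupport.mul_left hs)
  have i2 : ∀ (x : ℝ) (F : ℝ → ℂ), Continuous F → HasCompactSupport F →
      Integrable (fun y : ℝ => Complex.exp (Complex.I * k * ((y:ℂ) - x)) * F y) := by
    intro x F hF hs
    exact ((contE' x).mul hF).integrable_of_hasCompactSupport (HasCompactSupport.mul_left hs)
  -- value identities
  have ha_val : ∀ x : ℝ, a x = (Complex.exp (Complex.I * k * x) * (Cψ + ∫ t in (0:ℝ)..x, ψ t)
      + Complex.exp (-(Complex.I * k * x)) * (T - Cχ - ∫ t in (0:ℝ)..x, χ t)) / 2 := by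
    intro x
    simp only [ha, hG₁, hG₂]
    have hS₁ := green_sum k F₁ hF₁ hs₁ x
    have hD₁ := green_diff k F₁ hF₁ hs₁ x
    have hS₂ := green_sum k F₂ hF₂ hs₂ x
    have hD₂ := green_diff k F₂ hF₂ hs₂ x
    have e₁ := integral_sub ((i1 x F₁ hF₁ hs₁).integrableOn (s := Iic x))
      ((i1 x F₂ hF₂ hs₂).integrableOn (s := Iic x))
    have e₂ := integral_add ((i2 x F₁ hF₁ hs₁).integrableOn (s := Ici x))
      ((i2 x F₂ hF₂ hs₂).integrableOn (s := Ici x))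
    have e₁' : (∫ y in Iic x, (Complex.exp (Complex.I * k * ((x:ℂ) - y)) * F₁ y
          - Complex.exp (Complex.I * k * ((x:ℂ) - y)) * F₂ y))
        = ∫ y in Iic x, Complex.exp (Complex.I * k * ((x:ℂ) - y)) * (F₁ y - F₂ y) := by
      refine integral_congr_ae (Filter.Eventually.of_forall fun y => ?_)
      ring
    have e₂' : (∫ y in Ici x, (Complex.exp (Complex.I * k * ((y:ℂ) - x)) * F₁ y
          + Complex.exp (Complex.I * k * ((y:ℂ) - x)) * F₂ y))
        = ∫ y in Ici x, Complex.exp (Complex.I * k * ((y:ℂ) - x)) * (F₁ y + F₂ y) := by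
      refine integral_congr_ae (Filter.Eventually.of_forall fun y => ?_)
      ring
    linear_combination (hS₁ + hD₁ - hS₂ + hD₂ - e₁ - e₂ + e₁' + e₂' + hIic x + hIci x) / 2
  have hb_val : ∀ x : ℝ, b x = (Complex.exp (Complex.I * k * x) * (Cψ + ∫ t in (0:ℝ)..x, ψ t)
      - Complex.exp (-(Complex.I * k * x)) * (T - Cχ - ∫ t in (0:ℝ)..x, χ t)) / 2 := by
    intro x
    simp only [hb, hG₁, hG₂]
    have hS₁ := green_sum k F₁ hF₁ hs₁ x
    have hD₁ := green_diff k F₁ hF₁ hs₁ x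
    have hS₂ := green_sum k F₂ hF₂ hs₂ x
    have hD₂ := green_diff k F₂ hF₂ hs₂ x
    have e₁ := integral_sub ((i1 x F₁ hF₁ hs₁).integrableOn (s := Iic x))
      ((i1 x F₂ hF₂ hs₂).integrableOn (s := Iic x))
    have e₂ := integral_add ((i2 x F₁ hF₁ hs₁).integrableOn (s := Ici x))
      ((i2 x F₂ hF₂ hs₂).integrableOn (s := Ici x))
    have e₁' : (∫ y in Iic x, (Complex.exp (Complex.I * k * ((x:ℂ) - y)) * F₁ y
          - Complex.exp (Complex.I * k * ((x:ℂ) - y)) * F₂ y))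
        = ∫ y in Iic x, Complex.exp (Complex.I * k * ((x:ℂ) - y)) * (F₁ y - F₂ y) := by
      refine integral_congr_ae (Filter.Eventually.of_forall fun y => ?_)
      ring
    have e₂' : (∫ y in Ici x, (Complex.exp (Complex.I * k * ((y:ℂ) - x)) * F₁ y
          + Complex.exp (Complex.I * k * ((y:ℂ) - x)) * F₂ y))
        = ∫ y in Ici x, Complex.exp (Complex.I * k * ((y:ℂ) - x)) * (F₁ y + F₂ y) := by
      refine integral_congr_ae (Filter.Eventually.of_forall fun y => ?_)
      ring
    linear_combination (hS₁ - hD₁ - hS₂ - hD₂ - e₁ + e₂ + e₁' - e₂' + hIic x - hIci x) / 2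
  have hafun : a = fun x : ℝ => (Complex.exp (Complex.I * k * x) * (Cψ + ∫ t in (0:ℝ)..x, ψ t)
      + Complex.exp (-(Complex.I * k * x)) * (T - Cχ - ∫ t in (0:ℝ)..x, χ t)) / 2 :=
    funext ha_val
  have hbfun : b = fun x : ℝ => (Complex.exp (Complex.I * k * x) * (Cψ + ∫ t in (0:ℝ)..x, ψ t)
      - Complex.exp (-(Complex.I * k * x)) * (T - Cχ - ∫ t in (0:ℝ)..x, χ t)) / 2 :=
    funext hb_val
  -- derivatives of the building blocks
  have hA : ∀ x : ℝ, HasDerivAt (fun x : ℝ => ∫ t in (0:ℝ)..x, ψ t) (ψ x) x := fun x =>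
    intervalIntegral.integral_hasDerivAt_right (ψc.intervalIntegrable _ _)
      (ψc.stronglyMeasurableAtFilter _ _) ψc.continuousAt
  have hB : ∀ x : ℝ, HasDerivAt (fun x : ℝ => ∫ t in (0:ℝ)..x, χ t) (χ x) x := fun x =>
    intervalIntegral.integral_hasDerivAt_right (χc.intervalIntegrable _ _)
      (χc.stronglyMeasurableAtFilter _ _) χc.continuousAt
  have hE : ∀ x : ℝ, HasDerivAt (fun x : ℝ => Complex.exp (Complex.I * k * x))
      (Complex.I * k * Complex.exp (Complex.I * k * x)) x := by
    intro x
    have h := (((hasDerivAt_id ((x:ℝ):ℂ)).const_mul (Complex.I * k)).cexp).comp_ofReal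
    simpa [mul_comm] using h
  have hE' : ∀ x : ℝ, HasDerivAt (fun x : ℝ => Complex.exp (-(Complex.I * k * x)))
      (-(Complex.I * k) * Complex.exp (-(Complex.I * k * x))) x := by
    intro x
    have h := ((((hasDerivAt_id ((x:ℝ):ℂ)).const_mul (Complex.I * k)).neg).cexp).comp_ofReal
    simpa [mul_comm] using h
  have hexp : ∀ x : ℝ, Complex.exp (Complex.I * k * x) * Complex.exp (-(Complex.I * k * x)) = 1 := by
    intro x
    rw [← Complex.exp_add]
    simp
  have hder : ∀ x : ℝ, HasDerivAt a (Complex.I * k * b x - F₂ x) x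
      ∧ HasDerivAt b (Complex.I * k * a x + F₁ x) x := by
    intro x
    constructor
    · have hd := (((hE x).mul ((hA x).const_add Cψ)).add
        ((hE' x).mul ((hB x).const_sub (T - Cχ)))).div_const 2
      rw [hafun]
      refine hd.congr_deriv ?_
      rw [hb_val x]
      simp only [hψ, hχ]
      linear_combination (-(F₂ x)) * hexp x
    · have hd := (((hE x).mul ((hA x).const_add Cψ)).sub
        ((hE' x).mul ((hB x).const_sub (T - Cχ)))).div_const 2
      rw [hbfun]
      refine hd.congr_deriv ?_
      rw [ha_val x]
      simp only [hψ, hχ]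
      linear_combination (F₁ x) * hexp x
  refine ⟨hder, ?_⟩
  intro hc1 hc2 x
  have hda : deriv a = fun x : ℝ => Complex.I * k * b x - F₂ x :=
    funext fun y => ((hder y).1).deriv
  have hdb : deriv b = fun x : ℝ => Complex.I * k * a x + F₁ x :=
    funext fun y => ((hder y).2).deriv
  have hI : (Complex.I)^2 = -1 := Complex.I_sq
  constructor
  · rw [hda]
    have hd2 : HasDerivAt (fun x : ℝ => Complex.I * k * b x - F₂ x)
        (Complex.I * k * (Complex.I * k * a x + F₁ x) - deriv F₂ x) x :=
      (((hder x).2).const_mul (Complex.I * k)).sub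
        ((hc2.differentiable one_ne_zero x).hasDerivAt)
    rw [hd2.deriv]
    linear_combination (k^2 * a x) * hI
  · rw [hdb]
    have hd2 : HasDerivAt (fun x : ℝ => Complex.I * k * a x + F₁ x)
        (Complex.I * k * (Complex.I * k * b x - F₂ x) + deriv F₁ x) x :=
      (((hder x).1).const_mul (Complex.I * k)).add
        ((hc1.differentiable one_ne_zero x).hasDerivAt)
    rw [hd2.deriv]
    linear_combination (k^2 * b x) * hI
end

section
/- Let k ∈ ℂ, r > 0, and let F : ℝ → ℂ be continuous with support contained in [−r, r]. Define G₁(x) = e^{ik|x|}/2 and G₂(x) = (x/|x|)·e^{ik|x|}/2 (G₂(0) = 0), and set a = G₁∗F and b = G₂∗F. Then for every x > r, a and b are differentiable at x with a′(x) = ik a(x) and b′(x) = ik b(x); and for every x < −r, a′(x) = −ik a(x) and b′(x) = −ik b(x). Consequently a and b satisfy the outgoing condition: (x/|x|)a′(x) − ik a(x) = 0 and (x/|x|)b′(x) − ik b(x) = 0 for all |x| > r. -/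
open Complex MeasureTheory

lemma expMulDeriv (m C : ℂ) (x : ℝ) :
    HasDerivAt (fun x : ℝ => Complex.exp (m * x) * C) (m * (Complex.exp (m * x) * C)) x := by
  have h1 : HasDerivAt (fun x : ℝ => (x : ℂ)) 1 x := by
    simpa using (hasDerivAt_id x).ofReal_comp
  have h2 : HasDerivAt (fun x : ℝ => m * (x : ℂ)) m x := by
    simpa using h1.const_mul m
  have h3 := (h2.cexp).mul_const C
  rw [show m * (Complex.exp (m * x) * C) = Complex.exp (m * x) * m * C by ring]
  exact h3

/-- **Outgoing behavior of Green convolutions outside the source.** If `F` is continuous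
with support in `[−r, r]`, then `a = G₁∗F` and `b = G₂∗F` satisfy `a′ = ika`, `b′ = ikb`
for `x > r` and `a′ = −ika`, `b′ = −ikb` for `x < −r`; consequently
`(x/|x|)a′(x) − ika(x) = 0` and `(x/|x|)b′(x) − ikb(x) = 0` for all `|x| > r`. -/
theorem green_convolution_outgoing
    (k : ℂ) (r : ℝ) (hr : 0 < r)
    (F : ℝ → ℂ) (hF : Continuous F)
    (hsupp : ∀ x : ℝ, x ∉ Set.Icc (-r) r → F x = 0)
    (G₁ G₂ a b : ℝ → ℂ)
    (hG₁ : G₁ = fun x : ℝ => Complex.exp (Complex.I * k * |x|) / 2)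
    (hG₂ : G₂ = fun x : ℝ => ((x / |x| : ℝ) : ℂ) * Complex.exp (Complex.I * k * |x|) / 2)
    (ha : a = fun x : ℝ => ∫ y : ℝ, G₁ (x - y) * F y)
    (hb : b = fun x : ℝ => ∫ y : ℝ, G₂ (x - y) * F y) :
    (∀ x : ℝ, r < x → HasDerivAt a (Complex.I * k * a x) x
        ∧ HasDerivAt b (Complex.I * k * b x) x)
    ∧ (∀ x : ℝ, x < -r → HasDerivAt a (-(Complex.I * k) * a x) x
        ∧ HasDerivAt b (-(Complex.I * k) * b x) x)
    ∧ (∀ x : ℝ, r < |x| →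
        ((x / |x| : ℝ) : ℂ) * deriv a x - Complex.I * k * a x = 0
        ∧ ((x / |x| : ℝ) : ℂ) * deriv b x - Complex.I * k * b x = 0) := by
  set C : ℂ := ∫ y : ℝ, Complex.exp (-(Complex.I * k * y)) * F y / 2 with hC
  set D : ℂ := ∫ y : ℝ, Complex.exp (Complex.I * k * y) * F y / 2 with hD
  -- representation on the right
  have hA : ∀ x : ℝ, r < x → a x = Complex.exp (Complex.I * k * x) * C := by
    intro x hx
    have h1 : ∀ y : ℝ, G₁ (x - y) * F y
        = Complex.exp (Complex.I * k * x) * (Complex.exp (-(Complex.I * k * y)) * F y / 2) := by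
      intro y
      by_cases hy : y ∈ Set.Icc (-r) r
      · have hxy : (0:ℝ) < x - y := by
          have := hy.2; linarith
        rw [hG₁]
        simp only [abs_of_pos hxy]
        have he : Complex.exp (Complex.I * k * ((x - y : ℝ) : ℂ))
            = Complex.exp (Complex.I * k * x) * Complex.exp (-(Complex.I * k * y)) := by
          rw [← Complex.exp_add]; congr 1; push_cast; ring
        rw [he]; ring
      · rw [hsupp y hy]; ring
    rw [ha]
    simp only [h1]
    rw [integral_const_mul]
  have hB : ∀ x : ℝ, r < x → b x = Complex.exp (Complex.I * k * x) * C := by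
    intro x hx
    have h1 : ∀ y : ℝ, G₂ (x - y) * F y
        = Complex.exp (Complex.I * k * x) * (Complex.exp (-(Complex.I * k * y)) * F y / 2) := by
      intro y
      by_cases hy : y ∈ Set.Icc (-r) r
      · have hxy : (0:ℝ) < x - y := by
          have := hy.2; linarith
        rw [hG₂]
        simp only [abs_of_pos hxy, div_self (ne_of_gt hxy)]
        have he : Complex.exp (Complex.I * k * ((x - y : ℝ) : ℂ))
            = Complex.exp (Complex.I * k * x) * Complex.exp (-(Complex.I * k * y)) := by
          rw [← Complex.exp_add]; congr 1; push_cast; ring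
        rw [he]; push_cast; ring
      · rw [hsupp y hy]; ring
    rw [hb]
    simp only [h1]
    rw [integral_const_mul]
  -- representation on the left
  have hA' : ∀ x : ℝ, x < -r → a x = Complex.exp (-(Complex.I * k) * x) * D := by
    intro x hx
    have h1 : ∀ y : ℝ, G₁ (x - y) * F y
        = Complex.exp (-(Complex.I * k) * x) * (Complex.exp (Complex.I * k * y) * F y / 2) := by
      intro y
      by_cases hy : y ∈ Set.Icc (-r) r
      · have hxy : x - y < 0 := by
          have := hy.1; linarith
        rw [hG₁]
        simp only [abs_of_neg hxy]
        have he : Complex.exp (Complex.I * k * ((-(x - y) : ℝ) : ℂ))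
            = Complex.exp (-(Complex.I * k) * x) * Complex.exp (Complex.I * k * y) := by
          rw [← Complex.exp_add]; congr 1; push_cast; ring
        rw [he]; ring
      · rw [hsupp y hy]; ring
    rw [ha]
    simp only [h1]
    rw [integral_const_mul]
  have hB' : ∀ x : ℝ, x < -r → b x = Complex.exp (-(Complex.I * k) * x) * (-D) := by
    intro x hx
    have h1 : ∀ y : ℝ, G₂ (x - y) * F y
        = Complex.exp (-(Complex.I * k) * x) * (-(Complex.exp (Complex.I * k * y) * F y / 2)) := by
      intro y
      by_cases hy : y ∈ Set.Icc (-r) r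
      · have hxy : x - y < 0 := by
          have := hy.1; linarith
        have hsg : (x - y) / -(x - y) = -1 := by
          rw [div_neg, div_self (ne_of_lt hxy)]
        rw [hG₂]
        simp only [abs_of_neg hxy, hsg]
        have he : Complex.exp (Complex.I * k * ((-(x - y) : ℝ) : ℂ))
            = Complex.exp (-(Complex.I * k) * x) * Complex.exp (Complex.I * k * y) := by
          rw [← Complex.exp_add]; congr 1; push_cast; ring
        rw [he]; push_cast; ring
      · rw [hsupp y hy]; ring
    rw [hb]
    simp only [h1]
    rw [integral_const_mul, integral_neg]
  -- derivatives on the right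
  have right : ∀ x : ℝ, r < x → HasDerivAt a (Complex.I * k * a x) x
      ∧ HasDerivAt b (Complex.I * k * b x) x := by
    intro x hx
    have hev : ∀ᶠ y in nhds x, r < y := eventually_gt_nhds hx
    constructor
    · have h := (expMulDeriv (Complex.I * k) C x).congr_of_eventuallyEq
        (hev.mono fun y hy => hA y hy)
      rw [hA x hx]; exact h
    · have h := (expMulDeriv (Complex.I * k) C x).congr_of_eventuallyEq
        (hev.mono fun y hy => hB y hy)
      rw [hB x hx]; exact h
  have left : ∀ x : ℝ, x < -r → HasDerivAt a (-(Complex.I * k) * a x) x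
      ∧ HasDerivAt b (-(Complex.I * k) * b x) x := by
    intro x hx
    have hev : ∀ᶠ y in nhds x, y < -r := eventually_lt_nhds hx
    constructor
    · have h := (expMulDeriv (-(Complex.I * k)) D x).congr_of_eventuallyEq
        (hev.mono fun y hy => hA' y hy)
      rw [hA' x hx]; exact h
    · have h := (expMulDeriv (-(Complex.I * k)) (-D) x).congr_of_eventuallyEq
        (hev.mono fun y hy => hB' y hy)
      rw [hB' x hx]; exact h
  refine ⟨right, left, ?_⟩
  intro x hx
  have hx0 : x ≠ 0 := by intro h; rw [h] at hx; simp at hx; linarith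
  rcases hx0.lt_or_gt with hneg | hpos
  · have hxr : x < -r := by
      rw [abs_of_neg hneg] at hx; linarith
    have hsg : x / |x| = -1 := by
      rw [abs_of_neg hneg, div_neg, div_self hx0]
    obtain ⟨hda, hdb⟩ := left x hxr
    rw [hsg, hda.deriv, hdb.deriv]
    push_cast
    constructor <;> ring
  · have hxr : r < x := by
      rw [abs_of_pos hpos] at hx; linarith
    have hsg : x / |x| = 1 := by
      rw [abs_of_pos hpos, div_self hx0]
    obtain ⟨hda, hdb⟩ := right x hxr
    rw [hsg, hda.deriv, hdb.deriv]
    push_cast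
    constructor <;> ring
end
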